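/- arXiv:1904.04885 — 9 statements merged into one kernel-verified Lean document; each statement's English description precedes it below -/
import Mathlib

section
/- Let M be an n×n real matrix of the form M = Eᵀ A E where E is an m×n matrix and A is an m×m positive definite symmetric matrix. Then the linear map x ↦ Mx on ℝⁿ is cocoercive, i.e., there exists c > 0 such that ⟨Mx − My, x − y⟩ ≥ c‖Mx − My‖² for all x, y ∈ ℝⁿ. -/
open Matrix

private lemma mulVec_dot_self_le {n m : ℕ} (D : Matrix (Fin n) (Fin m) ℝ) (u : Fin m → ℝ) :
    (D.mulVec u) ⬝ᵥ (D.mulVec u) ≤ (∑ i, ∑ j, (D i j) ^ 2) * (u ⬝ᵥ u) := by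
  simp only [dotProduct, mulVec]
  rw [Finset.sum_mul]
  apply Finset.sum_le_sum
  intro i _
  have h := Finset.sum_mul_sq_le_sq_mul_sq Finset.univ (fun j => D i j) u
  calc (∑ j, D i j * u j) * (∑ j, D i j * u j) = (∑ j, D i j * u j) ^ 2 := (sq _).symm
    _ ≤ (∑ j, (D i j) ^ 2) * (∑ j, (u j) ^ 2) := h
    _ = (∑ j, (D i j) ^ 2) * ∑ j', u j' * u j' := by
        congr 1; exact Finset.sum_congr rfl fun j _ => sq (u j)

theorem psdPlus_matrix_cocoercive
    {m n : ℕ} (E : Matrix (Fin m) (Fin n) ℝ) (A : Matrix (Fin m) (Fin m) ℝ)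
    (hAsymm : A.IsSymm)
    (hApos : ∀ v : Fin m → ℝ, v ≠ 0 → 0 < A.mulVec v ⬝ᵥ v)
    (M : Matrix (Fin n) (Fin n) ℝ) (hM : M = Eᵀ * A * E) :
    ∃ c : ℝ, 0 < c ∧ ∀ x y : Fin n → ℝ,
      (M.mulVec x - M.mulVec y) ⬝ᵥ (x - y) ≥
        c * ((M.mulVec x - M.mulVec y) ⬝ᵥ (M.mulVec x - M.mulVec y)) := by
  -- A is positive semidefinite
  have hApsd : A.PosSemidef := by
    refine posSemidef_iff_dotProduct_mulVec.mpr ⟨?_, fun v => ?_⟩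
    · unfold Matrix.IsHermitian
      rw [conjTranspose_eq_transpose_of_trivial]; exact hAsymm
    · by_cases hv : v = 0
      · simp [hv]
      · have := (hApos v hv).le
        simpa [dotProduct_comm] using this
  obtain ⟨B, hB⟩ : ∃ B : Matrix (Fin m) (Fin m) ℝ, A = Bᴴ * B := by
    open scoped MatrixOrder in exact CStarAlgebra.nonneg_iff_eq_star_mul_self.mp hApsd.nonneg
  have hB' : A = Bᵀ * B := by
    rwa [conjTranspose_eq_transpose_of_trivial] at hB
  set C : Matrix (Fin m) (Fin n) ℝ := B * E with hC
  have hMC : M = Cᵀ * C := by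
    rw [hM, hB', hC, transpose_mul]
    simp only [Matrix.mul_assoc]
  set S : ℝ := ∑ i, ∑ j, (Cᵀ i j) ^ 2 with hS
  have hS0 : 0 ≤ S := by
    apply Finset.sum_nonneg; intro i _
    apply Finset.sum_nonneg; intro j _
    positivity
  refine ⟨1 / (S + 1), by positivity, fun x y => ?_⟩
  set v : Fin n → ℝ := x - y with hv
  have hMv : M.mulVec x - M.mulVec y = M.mulVec v := (mulVec_sub M x y).symm
  rw [hMv]
  set w : Fin m → ℝ := C.mulVec v with hw
  have hMvw : M.mulVec v = Cᵀ.mulVec w := by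
    rw [hMC, hw, mulVec_mulVec]
  -- ⟨Mv, v⟩ = w ⬝ w
  have key1 : (M.mulVec v) ⬝ᵥ v = w ⬝ᵥ w := by
    rw [hMvw, dotProduct_comm, dotProduct_mulVec, vecMul_transpose, ← hw]
  have hww : 0 ≤ w ⬝ᵥ w := by
    apply Finset.sum_nonneg; intro i _; exact mul_self_nonneg _
  have key2 : (M.mulVec v) ⬝ᵥ (M.mulVec v) ≤ (S + 1) * (w ⬝ᵥ w) := by
    rw [hMvw]
    calc (Cᵀ.mulVec w) ⬝ᵥ (Cᵀ.mulVec w) ≤ S * (w ⬝ᵥ w) := mulVec_dot_self_le Cᵀ w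
      _ ≤ (S + 1) * (w ⬝ᵥ w) := by nlinarith
  rw [key1]
  rw [ge_iff_le, div_mul_eq_mul_div, div_le_iff₀ (by positivity)]
  nlinarith
end

section
/- Let f : Ω → ℝ be a C¹ function on an open convex set Ω ⊆ ℝⁿ whose gradient ∇f is locally Lipschitz, and fix y ∈ ℝⁿ with ‖y‖ ≤ 1. If at almost every x ∈ Ω the function f is twice differentiable with operator norm ‖∇²f(x)‖ ≤ 1, then the function g_y(x) := ⟨∇f(x), y⟩ is ‖y‖-Lipschitz on Ω; consequently ∇f is 1-Lipschitz on Ω. -/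
open scoped RealInnerProductSpace

open MeasureTheory Set Filter Topology Metric

set_option maxHeartbeats 1000000
set_option synthInstance.maxHeartbeats 400000


private lemma oneD {φ : ℝ → ℝ} {c K h₀ : ℝ} (hc : 0 ≤ c) (hKc : c ≤ K) (hh₀ : 0 < h₀)
    (hcont : ∀ t ∈ Set.Icc (-h₀) (1+h₀), ContinuousAt φ t)
    (hq : ∀ t ∈ Set.Icc (0:ℝ) 1, ∀ h : ℝ, 0 < h → h ≤ h₀ → φ (t+h) - φ t ≤ K * h)
    (hae : ∀ᵐ t ∂(volume : Measure ℝ), t ∈ Set.Icc (0:ℝ) 1 →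
      ∃ d : ℝ, HasDerivAt φ d t ∧ d ≤ c) :
    φ 1 - φ 0 ≤ c := by
  set μ : Measure ℝ := volume.restrict (Icc (0:ℝ) 1) with hμ
  have hμuniv : μ univ = 1 := by
    simp [hμ, Real.volume_Icc]
  set h : ℕ → ℝ := fun n => min h₀ (1/(n+1)) with hh
  have hpos : ∀ n, 0 < h n := fun n => lt_min hh₀ (by positivity)
  have hle : ∀ n, h n ≤ h₀ := fun n => min_le_left _ _
  have htend : Tendsto h atTop (𝓝 0) :=
    squeeze_zero (fun n => (hpos n).le) (fun n => min_le_right _ _)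
      tendsto_one_div_add_atTop_nhds_zero_nat
  set q : ℕ → ℝ → ℝ := fun n t => (φ (t + h n) - φ t) / h n with hqdef
  have hmem : ∀ t ∈ Icc (0:ℝ) 1, ∀ s : ℝ, 0 ≤ s → s ≤ h₀ → t + s ∈ Icc (-h₀) (1+h₀) := by
    rintro t ⟨ht0, ht1⟩ s hs0 hs1
    constructor <;> nlinarith
  have hIccsub : Icc (0:ℝ) 1 ⊆ Icc (-h₀) (1+h₀) := Icc_subset_Icc (by linarith) (by linarith)
  have hcq : ∀ n, ContinuousOn (q n) (Icc (0:ℝ) 1) := by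
    intro n t ht
    have c1 : ContinuousAt (fun x : ℝ => φ (x + h n)) t := by
      have hc' := hcont (t + h n) (hmem t ht _ (hpos n).le (hle n))
      exact ContinuousAt.comp (g := φ) (f := fun x : ℝ => x + h n) (x := t) hc'
        ((continuous_add_right (h n)).continuousAt)
    have c2 : ContinuousAt φ t := hcont _ (hIccsub ht)
    exact ((c1.sub c2).div_const _).continuousWithinAt
  have hqint : ∀ n, Integrable (q n) μ := fun n => (hcq n).integrableOn_Icc
  have hqb : ∀ n, ∀ t ∈ Icc (0:ℝ) 1, q n t ≤ K := by
    intro n t ht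
    rw [hqdef]
    rw [div_le_iff₀ (hpos n)]
    exact hq t ht _ (hpos n) (hle n)
  have hφconOn : ContinuousOn φ (Icc (-h₀) (1+h₀)) := fun t ht => (hcont t ht).continuousWithinAt
  have hφii : ∀ u v : ℝ, u ∈ Icc (-h₀) (1+h₀) → v ∈ Icc (-h₀) (1+h₀) →
      IntervalIntegrable φ volume u v := fun u v hu hv =>
    (hφconOn.mono (uIcc_subset_Icc hu hv)).intervalIntegrable
  set F : ℝ → ℝ := fun x => ∫ s in (0:ℝ)..x, φ s with hF
  have mem0 : (0:ℝ) ∈ Icc (-h₀) (1+h₀) := ⟨by linarith, by linarith⟩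
  have mem1 : (1:ℝ) ∈ Icc (-h₀) (1+h₀) := ⟨by linarith, by linarith⟩
  have memh : ∀ n, h n ∈ Icc (-h₀) (1+h₀) := fun n =>
    ⟨by nlinarith [hpos n], by nlinarith [hle n, hpos n]⟩
  have mem1h : ∀ n, 1 + h n ∈ Icc (-h₀) (1+h₀) := fun n =>
    ⟨by nlinarith [hpos n], by nlinarith [hle n]⟩
  have hint_q : ∀ n, ∫ t, q n t ∂μ = ((F (1 + h n) - F 1) - (F (h n) - F 0)) / h n := by
    intro n
    have e1 : ∫ t, q n t ∂μ = ∫ t in (0:ℝ)..1, q n t := by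
      rw [hμ, intervalIntegral.integral_of_le (by norm_num : (0:ℝ) ≤ 1)]
      exact integral_Icc_eq_integral_Ioc
    have i1 : IntervalIntegrable (fun t => φ (t + h n)) volume 0 1 := by
      have := (hφii (h n) (1 + h n) (memh n) (mem1h n)).comp_add_right (h n)
      simpa using this
    have i2 : IntervalIntegrable φ volume 0 1 := hφii 0 1 mem0 mem1
    have e2 : ∫ t in (0:ℝ)..1, q n t
        = ((∫ t in (0:ℝ)..1, φ (t + h n)) - ∫ t in (0:ℝ)..1, φ t) / h n := by
      rw [hqdef]
      simp only []
      rw [← intervalIntegral.integral_sub i1 i2, ← intervalIntegral.integral_div]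
    have e3 : ∫ t in (0:ℝ)..1, φ (t + h n) = F (1 + h n) - F (h n) := by
      rw [intervalIntegral.integral_comp_add_right φ (h n), zero_add]
      rw [← intervalIntegral.integral_interval_sub_left
        (hφii 0 (1 + h n) mem0 (mem1h n)) (hφii 0 (h n) mem0 (memh n))]
    have e4 : F 0 = 0 := intervalIntegral.integral_same
    rw [e1, e2, e3, e4]
    ring
  have hopen : IsOpen (Ioo (-h₀) (1+h₀)) := isOpen_Ioo
  have hconIoo : ContinuousOn φ (Ioo (-h₀) (1+h₀)) := hφconOn.mono Ioo_subset_Icc_self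
  have hF1 : HasDerivAt F (φ 1) 1 :=
    intervalIntegral.integral_hasDerivAt_right (hφii 0 1 mem0 mem1)
      (hconIoo.stronglyMeasurableAtFilter hopen 1 ⟨by linarith, by linarith⟩)
      (hcont 1 mem1)
  have hF0 : HasDerivAt F (φ 0) 0 :=
    intervalIntegral.integral_hasDerivAt_right (hφii 0 0 mem0 mem0)
      (hconIoo.stronglyMeasurableAtFilter hopen 0 ⟨by linarith, by linarith⟩)
      (hcont 0 mem0)
  have hplus : ∀ x : ℝ, Tendsto (fun n => x + h n) atTop (𝓝[≠] x) := by
    intro x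
    apply tendsto_nhdsWithin_of_tendsto_nhds_of_eventually_within
    · simpa using tendsto_const_nhds.add htend
    · exact Eventually.of_forall fun n => by
        simp only [mem_compl_iff, mem_singleton_iff]
        intro hcontra
        exact (hpos n).ne' (by linarith)
  have slope_lim : ∀ (G : ℝ → ℝ) (x d : ℝ), HasDerivAt G d x →
      Tendsto (fun n => (G (x + h n) - G x) / h n) atTop (𝓝 d) := by
    intro G x d hd
    have := (hasDerivAt_iff_tendsto_slope.mp hd).comp (hplus x)
    refine this.congr fun n => ?_
    simp [Function.comp, slope_def_field]
  have tendsto_int : Tendsto (fun n => ∫ t, q n t ∂μ) atTop (𝓝 (φ 1 - φ 0)) := by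
    have t1 := slope_lim F 1 (φ 1) hF1
    have t0 := slope_lim F 0 (φ 0) hF0
    refine (t1.sub t0).congr fun n => ?_
    rw [hint_q n, zero_add]
    ring
  have hIccae : ∀ᵐ t ∂μ, t ∈ Icc (0:ℝ) 1 := ae_restrict_mem measurableSet_Icc
  have hintK : ∀ n, ∫ t, q n t ∂μ ≤ K := by
    intro n
    have hmono : ∫ t, q n t ∂μ ≤ ∫ _t, K ∂μ := by
      apply integral_mono_ae (hqint n) (integrable_const K)
      filter_upwards [hIccae] with t ht using hqb n t ht
    simpa [Measure.real, hμuniv] using hmono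
  have hLK : φ 1 - φ 0 ≤ K := le_of_tendsto tendsto_int (Eventually.of_forall hintK)
  have haeμ : ∀ᵐ t ∂μ, ∃ d : ℝ, HasDerivAt φ d t ∧ d ≤ c := by
    filter_upwards [ae_restrict_of_ae hae, hIccae] with t h1 h2 using h1 h2
  have hliminf : ∀ᵐ t ∂μ, ENNReal.ofReal (K - c)
      ≤ liminf (fun n => ENNReal.ofReal (K - q n t)) atTop := by
    filter_upwards [haeμ] with t ht
    obtain ⟨d, hd, hdc⟩ := ht
    have hq_t : Tendsto (fun n => q n t) atTop (𝓝 d) := slope_lim φ t d hd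
    have htnd : Tendsto (fun n => ENNReal.ofReal (K - q n t)) atTop
        (𝓝 (ENNReal.ofReal (K - d))) :=
      (ENNReal.continuous_ofReal.tendsto _).comp (tendsto_const_nhds.sub hq_t)
    rw [htnd.liminf_eq]
    exact ENNReal.ofReal_le_ofReal (by linarith)
  have hmeasq : ∀ n, AEMeasurable (q n) μ := fun n => (hcq n).aemeasurable measurableSet_Icc
  have hg_meas : ∀ n, AEMeasurable (fun t => ENNReal.ofReal (K - q n t)) μ := fun n =>
    ENNReal.measurable_ofReal.comp_aemeasurable (aemeasurable_const.sub (hmeasq n))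
  have hlin : ∀ n, ∫⁻ t, ENNReal.ofReal (K - q n t) ∂μ
      = ENNReal.ofReal (K - ∫ t, q n t ∂μ) := by
    intro n
    have hint' : Integrable (fun t => K - q n t) μ := (integrable_const K).sub (hqint n)
    have hnn : 0 ≤ᵐ[μ] fun t => K - q n t := by
      filter_upwards [hIccae] with t ht
      simp only [Pi.zero_apply]
      linarith [hqb n t ht]
    rw [← ofReal_integral_eq_lintegral_ofReal hint' hnn]
    congr 1
    rw [integral_sub (integrable_const K) (hqint n)]
    simp [Measure.real, hμuniv]
  have step1 : ENNReal.ofReal (K - c)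
      ≤ liminf (fun n => ENNReal.ofReal (K - ∫ t, q n t ∂μ)) atTop := by
    calc ENNReal.ofReal (K - c) = ∫⁻ _t, ENNReal.ofReal (K - c) ∂μ := by
          simp [hμuniv]
      _ ≤ ∫⁻ t, liminf (fun n => ENNReal.ofReal (K - q n t)) atTop ∂μ :=
          lintegral_mono_ae hliminf
      _ ≤ liminf (fun n => ∫⁻ t, ENNReal.ofReal (K - q n t) ∂μ) atTop :=
          lintegral_liminf_le' hg_meas
      _ = liminf (fun n => ENNReal.ofReal (K - ∫ t, q n t ∂μ)) atTop := by
          simp_rw [hlin]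
  have step2 : Tendsto (fun n => ENNReal.ofReal (K - ∫ t, q n t ∂μ)) atTop
      (𝓝 (ENNReal.ofReal (K - (φ 1 - φ 0)))) :=
    (ENNReal.continuous_ofReal.tendsto _).comp (tendsto_const_nhds.sub tendsto_int)
  rw [step2.liminf_eq] at step1
  have := (ENNReal.ofReal_le_ofReal_iff (by linarith)).mp step1
  linarith



private lemma fubini_shift {n : ℕ} {N : Set (EuclideanSpace ℝ (Fin n))} (hNm : MeasurableSet N)
    (hN0 : volume N = 0) (a v : EuclideanSpace ℝ (Fin n)) :
    ∀ᵐ w ∂(volume : Measure (EuclideanSpace ℝ (Fin n))),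
      ∀ᵐ t ∂(volume : Measure ℝ), a + w + t • v ∉ N := by
  set μ : Measure (EuclideanSpace ℝ (Fin n)) := volume with hμ
  set ν : Measure ℝ := volume with hν
  have hmapS : Measurable fun p : ℝ × EuclideanSpace ℝ (Fin n) => a + p.2 + p.1 • v := by
    fun_prop
  have hmapT : Measurable fun p : EuclideanSpace ℝ (Fin n) × ℝ => a + p.1 + p.2 • v := by
    fun_prop
  set S : Set (ℝ × EuclideanSpace ℝ (Fin n)) :=
    (fun p : ℝ × EuclideanSpace ℝ (Fin n) => a + p.2 + p.1 • v) ⁻¹' N with hS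
  have hSm : MeasurableSet S := hmapS hNm
  have hS0 : (ν.prod μ) S = 0 := by
    rw [Measure.measure_prod_null hSm]
    refine Eventually.of_forall fun t => ?_
    have hpt : ∀ w : EuclideanSpace ℝ (Fin n), a + w + t • v = w + (a + t • v) := by
      intro w; module
    have heq : (Prod.mk t ⁻¹' S) = (fun w => w + (a + t • v)) ⁻¹' N := by
      ext w
      simp only [hS, mem_preimage]
      rw [hpt w]
    simp only [Pi.zero_apply]
    rw [heq, measure_preimage_add_right]
    exact hN0
  set T : Set (EuclideanSpace ℝ (Fin n) × ℝ) :=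
    (fun p : EuclideanSpace ℝ (Fin n) × ℝ => a + p.1 + p.2 • v) ⁻¹' N with hT
  have hTm : MeasurableSet T := hmapT hNm
  have hT0 : (μ.prod ν) T = 0 := by
    rw [← Measure.prod_swap, Measure.map_apply measurable_swap hTm]
    have : Prod.swap ⁻¹' T = S := rfl
    rw [this]
    exact hS0
  have hae : ∀ᵐ z ∂(μ.prod ν), a + z.1 + z.2 • v ∉ N := by
    have := (measure_eq_zero_iff_ae_notMem).mp hT0
    filter_upwards [this] with z hz
    exact hz
  exact Measure.ae_ae_of_ae_prod hae


section Aux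
variable {n : ℕ}
local notation "E" => EuclideanSpace ℝ (Fin n)

private theorem key_ineq {Ω : Set E}
    (hΩopen : IsOpen Ω) (hΩconv : Convex ℝ Ω) {g : E → E}
    (hloc : ∀ x ∈ Ω, ∃ s ∈ nhds x, ∃ K : NNReal, LipschitzOnWith K g s)
    (hae : ∀ᵐ x ∂volume, x ∈ Ω → ∃ D : E →L[ℝ] E, HasFDerivAt g D x ∧ ‖D‖ ≤ 1)
    {a b : E} (ha : a ∈ Ω) (hb : b ∈ Ω)
    {y : E} (hy : ‖y‖ ≤ 1) :
    ⟪g b - g a, y⟫ ≤ ‖b - a‖ := by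
  classical
  -- continuity of g on Ω
  have gcont : ContinuousOn g Ω := by
    intro x hx
    obtain ⟨s, hs, K, hK⟩ := hloc x hx
    exact (hK.continuousOn.continuousAt hs).continuousWithinAt
  -- compact segment inside Ω and a compact thickening
  have hseg : segment ℝ a b ⊆ Ω := hΩconv.segment_subset ha hb
  have hsegcpt : IsCompact (segment ℝ a b) := by
    rw [segment_eq_image' ℝ a b]
    exact isCompact_Icc.image (continuous_const.add (continuous_id.smul continuous_const))
  obtain ⟨ε, hε, hCsub⟩ := hsegcpt.exists_cthickening_subset_open hΩopen hseg
  set C := cthickening ε (segment ℝ a b) with hCdef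
  have hCcpt : IsCompact C := hsegcpt.cthickening
  have hCΩ : C ⊆ Ω := hCsub
  -- uniform local Lipschitz constant on C
  obtain ⟨K, hK0, δ, hδ, hunif⟩ :
      ∃ K : ℝ, 0 ≤ K ∧ ∃ δ : ℝ, 0 < δ ∧ ∀ p ∈ C, ∀ q : E,
        dist q p ≤ δ → ‖g q - g p‖ ≤ K * dist q p := by
    have hball : ∀ x ∈ C, ∃ r : ℝ, 0 < r ∧ ∃ Kx : ℝ, 0 ≤ Kx ∧
        ∀ p ∈ ball x r, ∀ q ∈ ball x r, ‖g q - g p‖ ≤ Kx * dist q p := by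
      intro x hx
      obtain ⟨s, hs, K0, hK0⟩ := hloc x (hCΩ hx)
      obtain ⟨r, hr, hrs⟩ := Metric.mem_nhds_iff.mp hs
      refine ⟨r, hr, K0, K0.coe_nonneg, fun p hp q hq => ?_⟩
      have := hK0.dist_le_mul q (hrs hq) p (hrs hp)
      simpa [dist_eq_norm] using this
    choose! r hr Kf hKf0 hKf using hball
    obtain ⟨t, htC, htcover⟩ := hCcpt.elim_nhds_subcover (fun x => ball x (r x / 2))
      (fun x hx => ball_mem_nhds x (by have := hr x hx; positivity))
    have haC : a ∈ C := self_subset_cthickening _ (left_mem_segment ℝ a b)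
    have htne : t.Nonempty := by
      rcases Finset.eq_empty_or_nonempty t with hemp | hne
      · exfalso
        have := htcover haC
        simp [hemp] at this
      · exact hne
    refine ⟨t.sup' htne Kf, ?_, t.inf' htne (fun x => r x / 2), ?_, ?_⟩
    · obtain ⟨x, hx⟩ := htne
      exact le_trans (hKf0 x (htC x hx)) (Finset.le_sup' Kf hx)
    · rw [Finset.lt_inf'_iff]
      intro x hx
      have := hr x (htC x hx)
      positivity
    · intro p hp q hq
      obtain ⟨x, hxt, hpx⟩ : ∃ x ∈ t, p ∈ ball x (r x / 2) := by
        have := htcover hp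
        simpa using this
      have h2 : dist p x < r x / 2 := mem_ball.mp hpx
      have h1 : dist q p ≤ r x / 2 := le_trans hq (Finset.inf'_le _ hxt)
      have hq' : q ∈ ball x (r x) := by
        rw [mem_ball]
        calc dist q x ≤ dist q p + dist p x := dist_triangle _ _ _
          _ < r x := by linarith
      have hp' : p ∈ ball x (r x) := by
        rw [mem_ball]
        have := hr x (htC x hxt)
        linarith
      calc ‖g q - g p‖ ≤ Kf x * dist q p := hKf x (htC x hxt) p hp' q hq'
        _ ≤ t.sup' htne Kf * dist q p :=
            mul_le_mul_of_nonneg_right (Finset.le_sup' Kf hxt) dist_nonneg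
  -- step size
  set v : E := b - a with hv
  have hnv : (0:ℝ) < ‖v‖ + 1 := by positivity
  have hmin : 0 < min ε (min δ 1) := lt_min hε (lt_min hδ one_pos)
  set h₀ : ℝ := min ε (min δ 1) / (2 * (‖v‖ + 1)) with hh₀def
  have hh₀ : 0 < h₀ := by positivity
  have hh₀v : h₀ * ‖v‖ ≤ min ε (min δ 1) / 2 := by
    have e1 : h₀ * (‖v‖ + 1) = min ε (min δ 1) / 2 := by
      rw [hh₀def]; field_simp
    nlinarith [norm_nonneg v]
  have hh₀ε : h₀ * ‖v‖ ≤ ε / 2 := le_trans hh₀v (by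
    have : min ε (min δ 1) ≤ ε := min_le_left _ _
    linarith)
  have hh₀δ : h₀ * ‖v‖ ≤ δ := le_trans hh₀v (by
    have h1 : min ε (min δ 1) ≤ δ := le_trans (min_le_right _ _) (min_le_left _ _)
    linarith)
  -- membership of perturbed segment points in C
  have hmemC : ∀ w : E, ‖w‖ ≤ ε/2 → ∀ t : ℝ, -h₀ ≤ t → t ≤ 1 + h₀ → a + w + t • v ∈ C := by
    intro w hw t ht0 ht1
    set t' := max 0 (min t 1) with ht'def
    have ht'mem : t' ∈ Icc (0:ℝ) 1 := ⟨le_max_left _ _, max_le zero_le_one (min_le_right _ _)⟩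
    have hseg' : a + t' • v ∈ segment ℝ a b := by
      rw [segment_eq_image' ℝ a b]
      exact ⟨t', ht'mem, rfl⟩
    have habs : |t - t'| ≤ h₀ := by
      rw [abs_le]
      rcases le_total t 0 with h0 | h0
      · have : t' = 0 := by
          rw [ht'def, min_eq_left (le_trans h0 zero_le_one), max_eq_left h0]
        rw [this]
        constructor <;> linarith
      · rcases le_total t 1 with h1 | h1
        · have : t' = t := by rw [ht'def, min_eq_left h1, max_eq_right h0]
          rw [this]
          constructor <;> linarith [hh₀.le]
        · have : t' = 1 := by
            rw [ht'def, min_eq_right h1, max_eq_right zero_le_one]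
          rw [this]
          constructor <;> linarith
    have hdiff : a + w + t • v - (a + t' • v) = w + (t - t') • v := by
      rw [sub_smul]; module
    have hdist : dist (a + w + t • v) (a + t' • v) ≤ ε := by
      rw [dist_eq_norm, hdiff]
      calc ‖w + (t - t') • v‖ ≤ ‖w‖ + ‖(t - t') • v‖ := norm_add_le _ _
        _ = ‖w‖ + |t - t'| * ‖v‖ := by rw [norm_smul, Real.norm_eq_abs]
        _ ≤ ε/2 + h₀ * ‖v‖ := by
            have := mul_le_mul_of_nonneg_right habs (norm_nonneg v)
            linarith
        _ ≤ ε/2 + ε/2 := by linarith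
        _ = ε := by ring
    exact mem_cthickening_of_dist_le _ _ _ _ hseg' hdist
  -- the null bad set
  set Bad := {x : E | ¬ (x ∈ Ω → ∃ D : E →L[ℝ] E, HasFDerivAt g D x ∧ ‖D‖ ≤ 1)} with hBaddef
  have hBad0 : volume Bad = 0 := hae
  set N' := toMeasurable volume Bad with hN'def
  have hN'm : MeasurableSet N' := measurableSet_toMeasurable _ _
  have hN'0 : volume N' = 0 := by rw [hN'def, measure_toMeasurable]; exact hBad0
  have hNsub : Bad ⊆ N' := subset_toMeasurable _ _
  -- the main estimate for a.e. translate
  have main : ∀ w : E, ‖w‖ ≤ ε/2 →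
      (∀ᵐ t ∂(volume : Measure ℝ), a + w + t • v ∉ N') →
      ⟪g (b + w) - g (a + w), y⟫ ≤ ‖v‖ := by
    intro w hw hgoodw
    set φ : ℝ → ℝ := fun t => ⟪g (a + w + t • v), y⟫ with hφdef
    have cp : Continuous fun t : ℝ => a + w + t • v :=
      continuous_const.add (continuous_id.smul continuous_const)
    have hKK : ‖v‖ ≤ max (K * ‖v‖) ‖v‖ := le_max_right _ _
    have h1 : φ 1 - φ 0 ≤ ‖v‖ := by
      apply oneD (c := ‖v‖) (K := max (K * ‖v‖) ‖v‖) (norm_nonneg v) hKK hh₀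
      · -- continuity
        intro t ht
        have hmem' : a + w + t • v ∈ Ω := hCΩ (hmemC w hw t ht.1 ht.2)
        have hgAt : ContinuousAt g (a + w + t • v) :=
          gcont.continuousAt (hΩopen.mem_nhds hmem')
        have hc1 : ContinuousAt (fun s : ℝ => g (a + w + s • v)) t :=
          ContinuousAt.comp (g := g) (f := fun s : ℝ => a + w + s • v) (x := t) hgAt
            cp.continuousAt
        exact hc1.inner continuousAt_const
      · -- difference quotient bound
        intro t ht h hhpos hhle
        have hpt : a + w + t • v ∈ C := hmemC w hw t (by linarith [ht.1, hh₀.le]) (by linarith [ht.2, hh₀.le])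
        have hdiffpt : a + w + (t + h) • v - (a + w + t • v) = h • v := by
          rw [add_smul]; module
        have hdist : dist (a + w + (t + h) • v) (a + w + t • v) = h * ‖v‖ := by
          rw [dist_eq_norm, hdiffpt, norm_smul, Real.norm_eq_abs, abs_of_pos hhpos]
        have hdistδ : dist (a + w + (t + h) • v) (a + w + t • v) ≤ δ := by
          rw [hdist]
          calc h * ‖v‖ ≤ h₀ * ‖v‖ := mul_le_mul_of_nonneg_right hhle (norm_nonneg v)
            _ ≤ δ := hh₀δ
        have hlip := hunif _ hpt _ hdistδ
        have e1 : φ (t + h) - φ t = ⟪g (a + w + (t + h) • v) - g (a + w + t • v), y⟫ := by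
          simp only [hφdef]
          rw [inner_sub_left]
        rw [e1]
        calc ⟪g (a + w + (t + h) • v) - g (a + w + t • v), y⟫
            ≤ ‖g (a + w + (t + h) • v) - g (a + w + t • v)‖ * ‖y‖ := real_inner_le_norm _ _
          _ ≤ (K * (h * ‖v‖)) * ‖y‖ := by
              rw [← hdist]
              have hn := norm_nonneg (g (a + w + (t + h) • v) - g (a + w + t • v))
              have hy0 := norm_nonneg y
              nlinarith [dist_nonneg (x := a + w + (t + h) • v) (y := a + w + t • v)]
          _ ≤ K * ‖v‖ * h := by
              have hfac : K * (h * ‖v‖) * ‖y‖ = (K * ‖v‖ * h) * ‖y‖ := by ring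
              rw [hfac]
              have h0 : (0:ℝ) ≤ K * ‖v‖ * h := by positivity
              calc (K * ‖v‖ * h) * ‖y‖ ≤ (K * ‖v‖ * h) * 1 := mul_le_mul_of_nonneg_left hy h0
                _ = K * ‖v‖ * h := mul_one _
          _ ≤ max (K * ‖v‖) ‖v‖ * h := by
              have := le_max_left (K * ‖v‖) ‖v‖
              nlinarith [hhpos.le]
      · -- a.e. derivative bound
        filter_upwards [hgoodw] with t htN ht01
        have hptΩ : a + w + t • v ∈ Ω :=
          hCΩ (hmemC w hw t (by linarith [ht01.1, hh₀.le]) (by linarith [ht01.2, hh₀.le]))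
        have hnotbad : (a + w + t • v) ∉ Bad := fun hmem => htN (hNsub hmem)
        simp only [hBaddef, mem_setOf_eq, not_not] at hnotbad
        obtain ⟨D, hD, hD1⟩ := hnotbad hptΩ
        have hp' : HasDerivAt (fun s : ℝ => a + w + s • v) v t := by
          have hd1 : HasDerivAt (fun s : ℝ => s • v) ((1:ℝ) • v) t := (hasDerivAt_id t).smul_const v
          rw [one_smul] at hd1
          exact hd1.const_add (a + w)
        have hcomp : HasDerivAt (fun s => g (a + w + s • v)) (D v) t := hD.comp_hasDerivAt t hp'
        have hinner : HasDerivAt (fun s => ⟪y, g (a + w + s • v)⟫) ⟪y, D v⟫ t :=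
          (innerSL ℝ y).hasFDerivAt.comp_hasDerivAt t hcomp
        refine ⟨⟪y, D v⟫, ?_, ?_⟩
        · have : (fun s => ⟪y, g (a + w + s • v)⟫) = φ := by
            funext s
            rw [hφdef, real_inner_comm]
          rwa [this] at hinner
        · calc ⟪y, D v⟫ ≤ ‖y‖ * ‖D v‖ := real_inner_le_norm _ _
            _ ≤ 1 * (‖D‖ * ‖v‖) := by
                have := D.le_opNorm v
                have hDv := norm_nonneg (D v)
                nlinarith [norm_nonneg y]
            _ ≤ ‖v‖ := by nlinarith [norm_nonneg v, norm_nonneg (D : E →L[ℝ] E)]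
    have e0 : a + w + (0:ℝ) • v = a + w := by rw [zero_smul, add_zero]
    have e1 : a + w + (1:ℝ) • v = b + w := by rw [one_smul, hv]; module
    simp only [hφdef, e0, e1] at h1
    rw [inner_sub_left]
    linarith
  -- pass to the limit w → 0
  have hgood := fubini_shift hN'm hN'0 a v
  by_contra hcon
  push_neg at hcon
  set G : E → ℝ := fun w => ⟪g (b + w) - g (a + w), y⟫ with hGdef
  have hGcont : ContinuousAt G 0 := by
    have hga : ContinuousAt g a := gcont.continuousAt (hΩopen.mem_nhds ha)
    have hgb : ContinuousAt g b := gcont.continuousAt (hΩopen.mem_nhds hb)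
    have h1 : ContinuousAt (fun w : E => g (b + w)) 0 := by
      have : ContinuousAt g (b + 0) := by simpa using hgb
      exact this.comp ((continuous_const.add continuous_id).continuousAt)
    have h2 : ContinuousAt (fun w : E => g (a + w)) 0 := by
      have : ContinuousAt g (a + 0) := by simpa using hga
      exact this.comp ((continuous_const.add continuous_id).continuousAt)
    exact (h1.sub h2).inner continuousAt_const
  have hG0 : G 0 = ⟪g b - g a, y⟫ := by simp [hGdef]
  set ρ : ℝ := ⟪g b - g a, y⟫ - ‖b - a‖ with hρdef
  have hρpos : 0 < ρ := sub_pos.mpr hcon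
  obtain ⟨rr, hrr, hballG⟩ := Metric.continuousAt_iff.mp hGcont ρ hρpos
  set r' : ℝ := min rr (ε/2) with hr'def
  have hr'pos : 0 < r' := lt_min hrr (by positivity)
  obtain ⟨w, hwball, hwgood⟩ : ∃ w ∈ ball (0:E) r',
      ∀ᵐ t ∂(volume : Measure ℝ), a + w + t • v ∉ N' := by
    by_contra hno
    push_neg at hno
    have hsub : ball (0:E) r' ⊆
        {w : E | ¬ ∀ᵐ t ∂(volume : Measure ℝ), a + w + t • v ∉ N'} := fun w hw => hno w hw
    have h1 : volume {w : E | ¬ ∀ᵐ t ∂(volume : Measure ℝ), a + w + t • v ∉ N'} = 0 := hgood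
    have h2 := (measure_mono hsub).trans_eq h1
    exact (measure_ball_pos volume (0:E) hr'pos).ne' (le_antisymm h2 zero_le)
  have hwnorm : ‖w‖ < r' := by simpa [mem_ball, dist_zero_right] using hwball
  have hGw : G w ≤ ‖v‖ := main w (le_of_lt (lt_of_lt_of_le hwnorm (min_le_right _ _))) hwgood
  have hdistG : dist (G w) (G 0) < ρ := by
    apply hballG
    rw [dist_zero_right]
    exact lt_of_lt_of_le hwnorm (min_le_left _ _)
  rw [Real.dist_eq, hG0] at hdistG
  have habs := abs_lt.mp hdistG
  have hvba : ‖v‖ = ‖b - a‖ := by rw [hv]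
  rw [hvba] at hGw
  linarith [habs.1, habs.2]


end Aux

theorem ae_hessian_bound_implies_gradient_lipschitz
    {n : ℕ} (Ω : Set (EuclideanSpace ℝ (Fin n)))
    (hΩopen : IsOpen Ω) (hΩconv : Convex ℝ Ω)
    (f : EuclideanSpace ℝ (Fin n) → ℝ)
    (hf : ContDiffOn ℝ 1 f Ω)
    (hloc : ∀ x ∈ Ω, ∃ s ∈ nhds x, ∃ K : NNReal, LipschitzOnWith K (gradient f) s)
    (y : EuclideanSpace ℝ (Fin n)) (hy : ‖y‖ ≤ 1)
    (hae : ∀ᵐ x ∂MeasureTheory.volume, x ∈ Ω →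
      ∃ f'' : EuclideanSpace ℝ (Fin n) →L[ℝ] EuclideanSpace ℝ (Fin n),
        HasFDerivAt (gradient f) f'' x ∧ ‖f''‖ ≤ 1) :
    LipschitzOnWith ‖y‖₊ (fun x => ⟪gradient f x, y⟫) Ω ∧
      LipschitzOnWith 1 (gradient f) Ω := by
  have key : ∀ p ∈ Ω, ∀ q ∈ Ω, ‖gradient f p - gradient f q‖ ≤ ‖p - q‖ := by
    intro p hp q hq
    by_cases hpq : gradient f p = gradient f q
    · simp [hpq]
    · set x := gradient f p - gradient f q with hx
      have hxne : x ≠ 0 := sub_ne_zero.mpr hpq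
      have hxn : ‖x‖ ≠ 0 := norm_ne_zero_iff.mpr hxne
      set u := ‖x‖⁻¹ • x with hu
      have hun : ‖u‖ = 1 := norm_smul_inv_norm hxne
      have hthis := key_ineq hΩopen hΩconv hloc hae hq hp (le_of_eq hun)
      rw [hu, hx] at hthis
      rw [real_inner_smul_right, real_inner_self_eq_norm_mul_norm] at hthis
      have e : ‖gradient f p - gradient f q‖⁻¹ *
          (‖gradient f p - gradient f q‖ * ‖gradient f p - gradient f q‖)
          = ‖gradient f p - gradient f q‖ := by
        rw [hx] at hxn
        field_simp
      rw [e] at hthis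
      exact hthis
  constructor
  · apply LipschitzOnWith.of_dist_le_mul
    intro p hp q hq
    have hkey := key p hp q hq
    calc dist (⟪gradient f p, y⟫) (⟪gradient f q, y⟫)
        = |⟪gradient f p - gradient f q, y⟫| := by
          rw [Real.dist_eq, ← inner_sub_left]
      _ ≤ ‖gradient f p - gradient f q‖ * ‖y‖ := abs_real_inner_le_norm _ _
      _ ≤ ‖p - q‖ * ‖y‖ := mul_le_mul_of_nonneg_right hkey (norm_nonneg y)
      _ = ↑‖y‖₊ * dist p q := by rw [dist_eq_norm, coe_nnnorm]; ring
  · apply LipschitzOnWith.of_dist_le_mul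
    intro p hp q hq
    have hkey := key p hp q hq
    simpa [dist_eq_norm] using hkey
end

section
/- Let Ω ⊆ ℝⁿ be a nonempty open convex set, f : Ω → ℝ a convex C¹ function with locally Lipschitz gradient, and β > 0. Then the function x ↦ (β/2)‖x‖² − f(x) is convex on Ω if and only if ∇f is 1/β-cocoercive on Ω, i.e., β⟨∇f(x) − ∇f(y), x − y⟩ ≥ ‖∇f(x) − ∇f(y)‖² for all x, y ∈ Ω. -/
open scoped RealInnerProductSpace
open Set Filter Topology intervalIntegral

set_option linter.unusedSectionVars false
set_option maxHeartbeats 1000000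

variable {F : Type*} [NormedAddCommGroup F] [InnerProductSpace ℝ F] [CompleteSpace F]

lemma grad_inner (f : F → ℝ) (x v : F) : ⟪gradient f x, v⟫ = fderiv ℝ f x v :=
  InnerProductSpace.toDual_symm_apply

lemma line_hasDerivAt {f : F → ℝ} {base dir : F} {t₀ : ℝ}
    (hd : DifferentiableAt ℝ f (base + t₀ • dir)) :
    HasDerivAt (fun t : ℝ => f (base + t • dir)) ⟪gradient f (base + t₀ • dir), dir⟫ t₀ := by
  have hc : HasDerivAt (fun t : ℝ => base + t • dir) dir t₀ := by
    simpa using ((hasDerivAt_id t₀).smul_const dir).const_add base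
  have := hd.hasFDerivAt.comp_hasDerivAt t₀ hc
  rwa [grad_inner]

lemma quad_hasDerivAt (β : ℝ) (base dir : F) (t₀ : ℝ) :
    HasDerivAt (fun t : ℝ => β / 2 * ‖base + t • dir‖ ^ 2) (β * ⟪base + t₀ • dir, dir⟫) t₀ := by
  have hc : HasDerivAt (fun t : ℝ => base + t • dir) dir t₀ := by
    simpa using ((hasDerivAt_id t₀).smul_const dir).const_add base
  have h2 : HasDerivAt (fun t : ℝ => ⟪base + t • dir, base + t • dir⟫)
      (⟪base + t₀ • dir, dir⟫ + ⟪dir, base + t₀ • dir⟫) t₀ := hc.inner ℝ hc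
  have h3 := h2.const_mul (β / 2)
  have heq : ∀ t : ℝ, β / 2 * ⟪base + t • dir, base + t • dir⟫ = β / 2 * ‖base + t • dir‖ ^ 2 := by
    intro t; rw [real_inner_self_eq_norm_sq]
  have h4 : HasDerivAt (fun t : ℝ => β / 2 * ‖base + t • dir‖ ^ 2)
      (β / 2 * (⟪base + t₀ • dir, dir⟫ + ⟪dir, base + t₀ • dir⟫)) t₀ := by
    simpa only [heq] using h3
  convert h4 using 1
  rw [real_inner_comm dir]; ring

lemma conv_slope {Ω : Set F} {h : F → ℝ} (hconv : ConvexOn ℝ Ω h) {p u : F}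
    (hp : p ∈ Ω) (hq : p + u ∈ Ω) {m : ℝ}
    (hder : HasDerivAt (fun t : ℝ => h (p + t • u)) m 0) :
    m ≤ h (p + u) - h p := by
  have key : ∀ t : ℝ, t ∈ Ioo (0:ℝ) 1 → (h (p + t • u) - h p) / t ≤ h (p + u) - h p := by
    intro t ht
    have hcomb := hconv.2 hp hq (show (0:ℝ) ≤ 1 - t by linarith [ht.2]) ht.1.le (by ring)
    have : h (p + t • u) ≤ (1 - t) * h p + t * h (p + u) := by
      have heq : (1 - t) • p + t • (p + u) = p + t • u := by
        rw [smul_add]; module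
      rwa [heq] at hcomb
    rw [div_le_iff₀ ht.1]
    nlinarith
  have hslope : Tendsto (fun t : ℝ => (h (p + t • u) - h p) / t) (𝓝[>] 0) (𝓝 m) := by
    have := hder.tendsto_slope_zero_right
    simpa [div_eq_inv_mul] using this
  refine le_of_tendsto hslope ?_
  filter_upwards [Ioo_mem_nhdsGT_of_mem (by norm_num : (0:ℝ) ∈ Ico (0:ℝ) 1)] with t ht
  exact key t ht

section Main

variable {Ω : Set F} {f : F → ℝ} {β : ℝ}

lemma first_order (hconv : ConvexOn ℝ Ω f) (hfd : ∀ x ∈ Ω, DifferentiableAt ℝ f x)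
    {p q : F} (hp : p ∈ Ω) (hq : q ∈ Ω) : ⟪gradient f p, q - p⟫ ≤ f q - f p := by
  have h0 : p + (0:ℝ) • (q - p) = p := by simp
  have h := line_hasDerivAt (f := f) (base := p) (dir := q - p) (t₀ := 0) (by rw [h0]; exact hfd p hp)
  rw [h0] at h
  have := conv_slope hconv hp (by simpa using hq) h
  simpa using this

lemma first_order_g (hg : ConvexOn ℝ Ω (fun x => β / 2 * ‖x‖ ^ 2 - f x))
    (hfd : ∀ x ∈ Ω, DifferentiableAt ℝ f x)
    {p q : F} (hp : p ∈ Ω) (hq : q ∈ Ω) :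
    β * ⟪p, q - p⟫ - ⟪gradient f p, q - p⟫ ≤
      (β / 2 * ‖q‖ ^ 2 - f q) - (β / 2 * ‖p‖ ^ 2 - f p) := by
  have h0 : p + (0:ℝ) • (q - p) = p := by simp
  have h1 := line_hasDerivAt (f := f) (base := p) (dir := q - p) (t₀ := 0) (by rw [h0]; exact hfd p hp)
  have h2 := quad_hasDerivAt β p (q - p) 0
  rw [h0] at h1 h2
  have hder := h2.sub h1
  have := conv_slope hg hp (by simpa using hq) hder
  simpa using this

lemma mono_lower (hconv : ConvexOn ℝ Ω f) (hfd : ∀ x ∈ Ω, DifferentiableAt ℝ f x)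
    {p q : F} (hp : p ∈ Ω) (hq : q ∈ Ω) :
    0 ≤ ⟪gradient f p - gradient f q, p - q⟫ := by
  have h1 := first_order hconv hfd hp hq
  have h2 := first_order hconv hfd hq hp
  have e1 : ⟪gradient f p - gradient f q, p - q⟫
      = ⟪gradient f p, p - q⟫ - ⟪gradient f q, p - q⟫ := inner_sub_left _ _ _
  have e2 : ⟪gradient f p, q - p⟫ = -⟪gradient f p, p - q⟫ := by
    rw [← neg_sub, inner_neg_right]
  linarith

lemma mono_upper (hg : ConvexOn ℝ Ω (fun x => β / 2 * ‖x‖ ^ 2 - f x))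
    (hfd : ∀ x ∈ Ω, DifferentiableAt ℝ f x)
    {p q : F} (hp : p ∈ Ω) (hq : q ∈ Ω) :
    ⟪gradient f p - gradient f q, p - q⟫ ≤ β * ‖p - q‖ ^ 2 := by
  have h1 := first_order_g hg hfd hp hq
  have h2 := first_order_g hg hfd hq hp
  have e1 : ⟪gradient f p - gradient f q, p - q⟫
      = ⟪gradient f p, p - q⟫ - ⟪gradient f q, p - q⟫ := inner_sub_left _ _ _
  have e2 : ⟪gradient f p, q - p⟫ = -⟪gradient f p, p - q⟫ := by
    rw [← neg_sub, inner_neg_right]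
  have e3 : ⟪p, q - p⟫ + ⟪q, p - q⟫ = -‖p - q‖ ^ 2 := by
    have : ⟪q, p - q⟫ - ⟪p, p - q⟫ = ⟪q - p, p - q⟫ := (inner_sub_left _ _ _).symm
    have e4 : ⟪q - p, p - q⟫ = -⟪p - q, p - q⟫ := by rw [← neg_sub, inner_neg_left]
    have e5 : ⟪p - q, p - q⟫ = ‖p - q‖ ^ 2 := real_inner_self_eq_norm_sq _
    have e6 : ⟪p, q - p⟫ = -⟪p, p - q⟫ := by rw [← neg_sub, inner_neg_right]
    linarith
  have e3' : β * (⟪p, q - p⟫ + ⟪q, p - q⟫) = β * (-‖p - q‖ ^ 2) := by rw [e3]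
  linarith [e3']

lemma grad_contOn (hΩopen : IsOpen Ω) (hf : ContDiffOn ℝ 1 f Ω) :
    ContinuousOn (gradient f) Ω := by
  have h1 := hf.continuousOn_fderiv_of_isOpen hΩopen le_rfl
  exact (InnerProductSpace.toDual ℝ F).symm.continuous.comp_continuousOn h1

lemma inner_grad_contOn (hΩopen : IsOpen Ω) (hf : ContDiffOn ℝ 1 f Ω) (v base dir : F)
    {s : Set ℝ} (hmap : ∀ t ∈ s, base + t • dir ∈ Ω) :
    ContinuousOn (fun t : ℝ => ⟪gradient f (base + t • dir), v⟫) s := by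
  have hc : ContinuousOn (fun t : ℝ => base + t • dir) s :=
    (continuous_const.add (continuous_id.smul continuous_const)).continuousOn
  exact ((grad_contOn hΩopen hf).comp hc hmap).inner continuousOn_const

lemma ftc (hΩopen : IsOpen Ω) (hf : ContDiffOn ℝ 1 f Ω) {base dir : F} {a b : ℝ}
    (hab : a ≤ b) (hseg : ∀ t ∈ Icc a b, base + t • dir ∈ Ω) :
    ∫ t in a..b, ⟪gradient f (base + t • dir), dir⟫
      = f (base + b • dir) - f (base + a • dir) := by
  have hfd : ∀ x ∈ Ω, DifferentiableAt ℝ f x := fun x hx =>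
    (hf.differentiableOn one_ne_zero).differentiableAt (hΩopen.mem_nhds hx)
  apply intervalIntegral.integral_eq_sub_of_hasDerivAt
  · intro t ht
    rw [uIcc_of_le hab] at ht
    exact line_hasDerivAt (hfd _ (hseg t ht))
  · apply ContinuousOn.intervalIntegrable
    rw [uIcc_of_le hab]
    exact inner_grad_contOn hΩopen hf dir base dir hseg

lemma avg_tendsto {Φ : ℝ → ℝ → ℝ} {r₀ δ : ℝ} (hδ : 0 < δ)
    (hcont : ContinuousOn (fun q : ℝ × ℝ => Φ q.1 q.2)
      (Icc (-δ) δ ×ˢ Icc (r₀ - δ) (r₀ + δ))) :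
    Tendsto (fun s => (∫ r in r₀..r₀ + s, Φ s r) / s) (𝓝[>] 0) (𝓝 (Φ 0 r₀)) := by
  rw [Metric.tendsto_nhdsWithin_nhds]
  intro ε hε
  have hmem : ((0:ℝ), r₀) ∈ Icc (-δ) δ ×ˢ Icc (r₀ - δ) (r₀ + δ) := by
    simp only [Set.mem_prod, Set.mem_Icc]
    refine ⟨⟨by linarith, by linarith⟩, by linarith, by linarith⟩
  have hca := hcont.continuousWithinAt hmem
  rw [Metric.continuousWithinAt_iff] at hca
  obtain ⟨δ₁, hδ₁, hball⟩ := hca (ε / 2) (by linarith)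
  refine ⟨min δ₁ δ, by positivity, ?_⟩
  intro s hs hdist
  have hs0 : 0 < s := hs
  have hsd : s < min δ₁ δ := by
    rwa [Real.dist_eq, sub_zero, abs_of_pos hs0] at hdist
  have hsδ : s < δ := lt_of_lt_of_le hsd (min_le_right _ _)
  have hsδ₁ : s < δ₁ := lt_of_lt_of_le hsd (min_le_left _ _)
  set L := Φ 0 r₀ with hL
  have hbound : ∀ r ∈ Icc r₀ (r₀ + s), |Φ s r - L| ≤ ε / 2 := by
    intro r hr
    have hq : ((s, r) : ℝ × ℝ) ∈ Icc (-δ) δ ×ˢ Icc (r₀ - δ) (r₀ + δ) := by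
      simp only [Set.mem_prod, Set.mem_Icc]
      refine ⟨⟨by linarith, by linarith⟩, by linarith [hr.1], by linarith [hr.2]⟩
    have hd : dist ((s, r) : ℝ × ℝ) ((0:ℝ), r₀) < δ₁ := by
      rw [Prod.dist_eq]
      apply max_lt
      · rw [Real.dist_eq, sub_zero, abs_of_pos hs0]; exact hsδ₁
      · rw [Real.dist_eq, abs_of_nonneg (by linarith [hr.1])]
        linarith [hr.2]
    have := hball hq hd
    rw [Real.dist_eq] at this
    exact le_of_lt this
  have hint : IntervalIntegrable (fun r => Φ s r) MeasureTheory.volume r₀ (r₀ + s) := by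
    apply ContinuousOn.intervalIntegrable
    rw [uIcc_of_le (by linarith)]
    intro r hr
    have := hcont.comp (f := fun r : ℝ => ((s : ℝ), r)) (continuous_const.prodMk continuous_id).continuousOn
      (fun r (hr : r ∈ Icc r₀ (r₀ + s)) => by
        simp only [Set.mem_prod, Set.mem_Icc]
        refine ⟨⟨by linarith, by linarith⟩, by linarith [hr.1], by linarith [hr.2]⟩)
    exact this r hr
  have hIL : (∫ r in r₀..r₀ + s, L) = s * L := by
    rw [intervalIntegral.integral_const, smul_eq_mul]; ring
  have hkey : |(∫ r in r₀..r₀ + s, Φ s r) - s * L| ≤ ε / 2 * s := by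
    rw [← hIL, ← intervalIntegral.integral_sub hint intervalIntegrable_const]
    have := intervalIntegral.norm_integral_le_of_norm_le_const
      (f := fun r => Φ s r - L) (a := r₀) (b := r₀ + s) (C := ε / 2) ?_
    · rw [Real.norm_eq_abs] at this
      calc |∫ r in r₀..r₀ + s, (Φ s r - L)| ≤ ε / 2 * |r₀ + s - r₀| := this
        _ = ε / 2 * s := by rw [show r₀ + s - r₀ = s by ring, abs_of_pos hs0]
    · intro x hx
      rw [uIoc_of_le (by linarith)] at hx
      exact hbound x ⟨hx.1.le, hx.2⟩
  have : dist ((∫ r in r₀..r₀ + s, Φ s r) / s) L ≤ ε / 2 := by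
    rw [Real.dist_eq, show (∫ r in r₀..r₀ + s, Φ s r) / s - L
        = ((∫ r in r₀..r₀ + s, Φ s r) - s * L) / s by field_simp]
    rw [abs_div, abs_of_pos hs0, div_le_iff₀ hs0]
    linarith [hkey]
  linarith [this]

lemma slope_tendsto {f : F → ℝ} {x : F} (u : F) (hd : DifferentiableAt ℝ f x) :
    Tendsto (fun s : ℝ => (f (x + s • u) - f x) / s) (𝓝[>] 0) (𝓝 ⟪gradient f x, u⟫) := by
  have h0 : x + (0:ℝ) • u = x := by simp
  have h := line_hasDerivAt (f := f) (base := x) (dir := u) (t₀ := 0) (by rw [h0]; exact hd)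
  rw [h0] at h
  have := h.tendsto_slope_zero_right
  simpa [div_eq_inv_mul] using this


lemma coco_backward (hΩopen : IsOpen Ω) (hΩconv : Convex ℝ Ω)
    (hf : ContDiffOn ℝ 1 f Ω) (hβ : 0 < β)
    (hco : ∀ x ∈ Ω, ∀ y ∈ Ω,
      β * ⟪gradient f x - gradient f y, x - y⟫ ≥ ‖gradient f x - gradient f y‖ ^ 2) :
    ConvexOn ℝ Ω (fun x => β / 2 * ‖x‖ ^ 2 - f x) := by
  have hfd : ∀ x ∈ Ω, DifferentiableAt ℝ f x := fun x hx =>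
    (hf.differentiableOn one_ne_zero).differentiableAt (hΩopen.mem_nhds hx)
  -- cocoercivity implies the Lipschitz-type monotone bound
  have hmono : ∀ p ∈ Ω, ∀ q ∈ Ω,
      ⟪gradient f p - gradient f q, p - q⟫ ≤ β * ‖p - q‖ ^ 2 := by
    intro p hp q hq
    have h1 := hco p hp q hq
    have h2 := real_inner_le_norm (gradient f p - gradient f q) (p - q)
    have h3 : (0:ℝ) ≤ ‖gradient f p - gradient f q‖ := norm_nonneg _
    have h4 : (0:ℝ) ≤ ‖p - q‖ := norm_nonneg _
    nlinarith [sq_nonneg (‖gradient f p - gradient f q‖ - β * ‖p - q‖)]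
  refine ⟨hΩconv, ?_⟩
  intro p hp q hq a b ha hb hab
  set u := q - p with hu
  set φ : ℝ → ℝ := fun t => β / 2 * ‖p + t • u‖ ^ 2 - f (p + t • u) with hφ
  have hzmem : ∀ t : ℝ, t ∈ Icc (0:ℝ) 1 → p + t • u ∈ Ω := by
    intro t ht
    have := hΩconv hp hq (by linarith [ht.2] : (0:ℝ) ≤ 1 - t) ht.1 (by ring)
    have heq : (1 - t) • p + t • q = p + t • u := by rw [hu]; module
    rwa [heq] at this
  have hder : ∀ t : ℝ, t ∈ Ioo (0:ℝ) 1 →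
      HasDerivAt φ (β * ⟪p + t • u, u⟫ - ⟪gradient f (p + t • u), u⟫) t := by
    intro t ht
    exact (quad_hasDerivAt β p u t).sub
      (line_hasDerivAt (hfd _ (hzmem t ⟨ht.1.le, ht.2.le⟩)))
  have hconvφ : ConvexOn ℝ (Icc (0:ℝ) 1) φ := by
    apply MonotoneOn.convexOn_of_deriv (convex_Icc 0 1)
    · -- continuity
      have hc : ContinuousOn (fun t : ℝ => p + t • u) (Icc (0:ℝ) 1) :=
        (continuous_const.add (continuous_id.smul continuous_const)).continuousOn
      have h1 : ContinuousOn (fun t : ℝ => f (p + t • u)) (Icc (0:ℝ) 1) :=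
        (hf.continuousOn).comp hc hzmem
      exact ((continuous_const.mul ((continuous_const.add
        (continuous_id.smul continuous_const)).norm.pow 2)).continuousOn).sub h1
    · rw [interior_Icc]
      intro t ht
      exact ((hder t ht).differentiableAt.differentiableWithinAt)
    · rw [interior_Icc]
      intro t₁ ht₁ t₂ ht₂ h12
      rw [(hder t₁ ht₁).deriv, (hder t₂ ht₂).deriv]
      rcases eq_or_lt_of_le h12 with rfl | hlt
      · exact le_rfl
      have hq1 : p + t₂ • u ∈ Ω := hzmem t₂ ⟨ht₂.1.le, ht₂.2.le⟩
      have hq2 : p + t₁ • u ∈ Ω := hzmem t₁ ⟨ht₁.1.le, ht₁.2.le⟩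
      have hm := hmono _ hq1 _ hq2
      have hdiff : (p + t₂ • u) - (p + t₁ • u) = (t₂ - t₁) • u := by module
      rw [hdiff] at hm
      have e1 : ⟪gradient f (p + t₂ • u) - gradient f (p + t₁ • u), (t₂ - t₁) • u⟫
          = (t₂ - t₁) * (⟪gradient f (p + t₂ • u), u⟫ - ⟪gradient f (p + t₁ • u), u⟫) := by
        rw [real_inner_smul_right, inner_sub_left]
      have e2 : ‖(t₂ - t₁) • u‖ ^ 2 = (t₂ - t₁) ^ 2 * ‖u‖ ^ 2 := by
        rw [norm_smul, mul_pow, Real.norm_eq_abs, sq_abs]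
      rw [e1, e2] at hm
      have e3 : ⟪p + t₂ • u, u⟫ - ⟪p + t₁ • u, u⟫ = (t₂ - t₁) * ‖u‖ ^ 2 := by
        rw [inner_add_left, inner_add_left, real_inner_smul_left, real_inner_smul_left,
          real_inner_self_eq_norm_sq]
        ring
      have hts : 0 < t₂ - t₁ := by linarith
      have hdv : (t₂ - t₁) * (⟪gradient f (p + t₂ • u), u⟫ - ⟪gradient f (p + t₁ • u), u⟫)
          ≤ (t₂ - t₁) * (β * ((t₂ - t₁) * ‖u‖ ^ 2)) := by nlinarith [hm]
      have hdv2 := (mul_le_mul_iff_right₀ hts).mp hdv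
      have e3b : β * ⟪p + t₂ • u, u⟫ - β * ⟪p + t₁ • u, u⟫ = β * ((t₂ - t₁) * ‖u‖ ^ 2) := by
        rw [← mul_sub, e3]
      linarith
  -- use 1-D convexity
  have h0 : (0:ℝ) ∈ Icc (0:ℝ) 1 := by constructor <;> norm_num
  have h1 : (1:ℝ) ∈ Icc (0:ℝ) 1 := by constructor <;> norm_num
  have := hconvφ.2 h0 h1 ha hb hab
  have hval : φ (a * 0 + b * 1) = β / 2 * ‖a • p + b • q‖ ^ 2 - f (a • p + b • q) := by
    have heq : p + (a * 0 + b * 1) • u = a • p + b • q := by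
      rw [hu]
      have : a = 1 - b := by linarith
      rw [this]; module
    rw [hφ]; simp only []; rw [heq]
  have hφ0 : φ 0 = β / 2 * ‖p‖ ^ 2 - f p := by rw [hφ]; simp
  have hφ1 : φ 1 = β / 2 * ‖q‖ ^ 2 - f q := by
    rw [hφ]; simp only [one_smul]
    have : p + u = q := by rw [hu]; module
    rw [this]
  rw [smul_eq_mul, smul_eq_mul] at this
  rw [hval, hφ0, hφ1] at this
  simpa using this


lemma coco_forward (hΩopen : IsOpen Ω) (hΩconv : Convex ℝ Ω)
    (hconv : ConvexOn ℝ Ω f) (hf : ContDiffOn ℝ 1 f Ω) (hβ : 0 < β)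
    (hg : ConvexOn ℝ Ω (fun x => β / 2 * ‖x‖ ^ 2 - f x)) :
    ∀ x ∈ Ω, ∀ y ∈ Ω,
      β * ⟪gradient f x - gradient f y, x - y⟫ ≥ ‖gradient f x - gradient f y‖ ^ 2 := by
  have hfd : ∀ x ∈ Ω, DifferentiableAt ℝ f x := fun x hx =>
    (hf.differentiableOn one_ne_zero).differentiableAt (hΩopen.mem_nhds hx)
  intro x hx y hy
  set d := x - y with hd
  set w := gradient f x - gradient f y with hw
  by_cases hw0 : w = 0
  · rw [hw0]; simp
  -- thickening of the segment
  have hzc : Continuous (fun t : ℝ => y + t • d) :=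
    continuous_const.add (continuous_id.smul continuous_const)
  have hK : IsCompact ((fun t : ℝ => y + t • d) '' Icc 0 1) :=
    isCompact_Icc.image hzc
  have hKsub : (fun t : ℝ => y + t • d) '' Icc 0 1 ⊆ Ω := by
    rintro _ ⟨t, ht, rfl⟩
    have := hΩconv hy hx (by linarith [ht.2] : (0:ℝ) ≤ 1 - t) ht.1 (by ring)
    have heq : (1 - t) • y + t • x = y + t • d := by rw [hd]; module
    rwa [heq] at this
  obtain ⟨δ, hδpos, hδsub⟩ := hK.exists_thickening_subset_open hΩopen hKsub
  -- the quadratic-in-l claim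
  have claim : ∀ l : ℝ, 0 ≤ β * ‖w‖ ^ 2 * l ^ 2 + 2 * ‖w‖ ^ 2 * l + ⟪w, d⟫ := by
    intro l
    set η := δ / (2 * (‖d‖ + |l| * ‖w‖ + 1)) with hη
    have hS : (0:ℝ) ≤ ‖d‖ + |l| * ‖w‖ := by positivity
    have hηpos : 0 < η := by rw [hη]; positivity
    have hmemΩ : ∀ (r c : ℝ), -η ≤ r → r ≤ 1 + η → |c| ≤ η * |l| →
        y + r • d + c • w ∈ Ω := by
      intro r c hr1 hr2 hc
      have key : ∀ t, t ∈ Icc (0:ℝ) 1 → |r - t| ≤ η → y + r • d + c • w ∈ Ω := by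
        intro t ht htr
        apply hδsub
        rw [Metric.mem_thickening_iff]
        refine ⟨y + t • d, ⟨t, ht, rfl⟩, ?_⟩
        have hvec : y + r • d + c • w - (y + t • d) = (r - t) • d + c • w := by module
        rw [dist_eq_norm, hvec]
        have h1 : ‖(r - t) • d + c • w‖ ≤ |r - t| * ‖d‖ + |c| * ‖w‖ := by
          calc ‖(r - t) • d + c • w‖ ≤ ‖(r - t) • d‖ + ‖c • w‖ := norm_add_le _ _
            _ = |r - t| * ‖d‖ + |c| * ‖w‖ := by
                rw [norm_smul, norm_smul, Real.norm_eq_abs, Real.norm_eq_abs]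
        have h2 : |r - t| * ‖d‖ + |c| * ‖w‖ ≤ η * ‖d‖ + η * (|l| * ‖w‖) := by
          have := mul_le_mul_of_nonneg_right htr (norm_nonneg d)
          have h3 : |c| * ‖w‖ ≤ η * |l| * ‖w‖ :=
            mul_le_mul_of_nonneg_right hc (norm_nonneg w)
          nlinarith
        have h4 : η * ‖d‖ + η * (|l| * ‖w‖) < δ := by
          rw [hη]
          rw [div_mul_eq_mul_div, div_mul_eq_mul_div, ← add_div, div_lt_iff₀ (by positivity)]
          nlinarith [abs_nonneg l, norm_nonneg d, norm_nonneg w]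
        linarith
      rcases le_total r 0 with h0 | h0
      · exact key 0 ⟨le_rfl, zero_le_one⟩ (by rw [sub_zero, abs_le]; exact ⟨hr1, by linarith⟩)
      rcases le_total r 1 with h1 | h1
      · exact key r ⟨h0, h1⟩ (by simp [hηpos.le])
      · exact key 1 ⟨zero_le_one, le_rfl⟩
          (by rw [abs_le]; constructor <;> [linarith [hηpos]; linarith])
    set ψ : ℝ → ℝ → ℝ := fun s r => ⟪gradient f (y + r • d + (s * l) • w), w⟫ with hψ
    set p : F := d + l • w with hp
    set A1 : ℝ → ℝ := fun s => (f (x + s • p) - f x) / s - (f (y + s • p) - f y) / s with hA1def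
    set A2 : ℝ → ℝ := fun s =>
      l * ((∫ r in (1:ℝ)..1 + s, ψ s r) / s - (∫ r in (0:ℝ)..0 + s, ψ s r) / s) with hA2def
    -- continuity of ψ on the big box
    have hψbox : ContinuousOn (fun q : ℝ × ℝ => ψ q.1 q.2)
        (Icc (-η) η ×ˢ Icc (-η) (1 + η)) := by
      have hm : ContinuousOn (fun q : ℝ × ℝ => y + q.2 • d + (q.1 * l) • w)
          (Icc (-η) η ×ˢ Icc (-η) (1 + η)) :=
        ((continuous_const.add (continuous_snd.smul continuous_const)).add
          ((continuous_fst.mul continuous_const).smul continuous_const)).continuousOn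
      have hmap : ∀ q ∈ Icc (-η) η ×ˢ Icc (-η) (1 + η),
          y + q.2 • d + (q.1 * l) • w ∈ Ω := by
        intro q hq
        refine hmemΩ q.2 (q.1 * l) hq.2.1 hq.2.2 ?_
        rw [abs_mul]
        exact mul_le_mul_of_nonneg_right (abs_le.2 ⟨hq.1.1, hq.1.2⟩) (abs_nonneg l)
      exact (((grad_contOn hΩopen hf).comp hm hmap).inner continuousOn_const)
    have hav1 : Tendsto (fun s => (∫ r in (1:ℝ)..1 + s, ψ s r) / s) (𝓝[>] 0)
        (𝓝 (ψ 0 1)) := by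
      apply avg_tendsto hηpos
      exact hψbox.mono (prod_mono Subset.rfl (Icc_subset_Icc (by linarith) (by linarith)))
    have hav0 : Tendsto (fun s => (∫ r in (0:ℝ)..0 + s, ψ s r) / s) (𝓝[>] 0)
        (𝓝 (ψ 0 0)) := by
      apply avg_tendsto hηpos
      exact hψbox.mono (prod_mono Subset.rfl (Icc_subset_Icc (by linarith) (by linarith)))
    have hψ01 : ψ 0 1 = ⟪gradient f x, w⟫ := by
      show ⟪gradient f (y + (1:ℝ) • d + ((0:ℝ) * l) • w), w⟫ = _
      have e : y + (1:ℝ) • d + ((0:ℝ) * l) • w = x := by rw [hd]; module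
      rw [e]
    have hψ00 : ψ 0 0 = ⟪gradient f y, w⟫ := by
      show ⟪gradient f (y + (0:ℝ) • d + ((0:ℝ) * l) • w), w⟫ = _
      have e : y + (0:ℝ) • d + ((0:ℝ) * l) • w = y := by module
      rw [e]
    have hA2lim : Tendsto A2 (𝓝[>] 0) (𝓝 (l * ‖w‖ ^ 2)) := by
      have h := (hav1.sub hav0).const_mul l
      rw [hψ01, hψ00] at h
      have : l * (⟪gradient f x, w⟫ - ⟪gradient f y, w⟫) = l * ‖w‖ ^ 2 := by
        rw [← inner_sub_left, ← hw, real_inner_self_eq_norm_sq]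
      rwa [this] at h
    have hA1lim : Tendsto A1 (𝓝[>] 0) (𝓝 (⟪w, d⟫ + l * ‖w‖ ^ 2)) := by
      have h := (slope_tendsto p (hfd x hx)).sub (slope_tendsto p (hfd y hy))
      have : ⟪gradient f x, p⟫ - ⟪gradient f y, p⟫ = ⟪w, d⟫ + l * ‖w‖ ^ 2 := by
        rw [← inner_sub_left, ← hw, hp, inner_add_right, real_inner_smul_right,
          real_inner_self_eq_norm_sq]
      rwa [this] at h
    -- the eventual inequality
    have hev : ∀ s ∈ Ioo (0:ℝ) η, 0 ≤ A1 s + A2 s + β * l ^ 2 * ‖w‖ ^ 2 := by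
      intro s hs
      obtain ⟨hs0, hsη⟩ := hs
      have habs : |s * l| ≤ η * |l| := by
        rw [abs_mul, abs_of_pos hs0]
        exact mul_le_mul_of_nonneg_right hsη.le (abs_nonneg l)
      have M1 : ∀ t ∈ Icc (0:ℝ) 1, y + s • p + t • d ∈ Ω := by
        intro t ht
        have e : y + s • p + t • d = y + (t + s) • d + (s * l) • w := by rw [hp]; module
        rw [e]
        exact hmemΩ (t + s) (s * l) (by linarith [ht.1]) (by linarith [ht.2]) habs
      have M2 : ∀ t ∈ Icc (0:ℝ) 1, y + t • d ∈ Ω := by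
        intro t ht
        have := hmemΩ t 0 (by linarith [ht.1]) (by linarith [ht.2])
          (by simp; positivity)
        simpa using this
      have M3 : ∀ r, -η ≤ r → r ≤ 1 + η → y + r • d + (s * l) • w ∈ Ω := fun r h1 h2 =>
        hmemΩ r (s * l) h1 h2 habs
      -- continuity / integrability
      have hcd1 : ContinuousOn (fun t : ℝ => ⟪gradient f (y + s • p + t • d), d⟫) (Icc 0 1) :=
        inner_grad_contOn hΩopen hf d (y + s • p) d M1
      have hcw1 : ContinuousOn (fun t : ℝ => ⟪gradient f (y + s • p + t • d), w⟫) (Icc 0 1) :=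
        inner_grad_contOn hΩopen hf w (y + s • p) d M1
      have hcd2 : ContinuousOn (fun t : ℝ => ⟪gradient f (y + t • d), d⟫) (Icc 0 1) :=
        inner_grad_contOn hΩopen hf d y d M2
      have hcw2 : ContinuousOn (fun t : ℝ => ⟪gradient f (y + t • d), w⟫) (Icc 0 1) :=
        inner_grad_contOn hΩopen hf w y d M2
      have hcψ : ContinuousOn (ψ s) (Icc (-η) (1 + η)) := by
        have harr : ∀ r : ℝ, (y + (s * l) • w) + r • d = y + r • d + (s * l) • w :=
          fun r => by module
        have h := inner_grad_contOn hΩopen hf w (y + (s * l) • w) d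
          (s := Icc (-η) (1 + η)) (fun r hr => by rw [harr]; exact M3 r hr.1 hr.2)
        simp only [harr] at h
        exact h
      have hi_d1 : IntervalIntegrable (fun t : ℝ => ⟪gradient f (y + s • p + t • d), d⟫)
          MeasureTheory.volume 0 1 := hcd1.intervalIntegrable_of_Icc zero_le_one
      have hi_w1 : IntervalIntegrable (fun t : ℝ => ⟪gradient f (y + s • p + t • d), w⟫)
          MeasureTheory.volume 0 1 := hcw1.intervalIntegrable_of_Icc zero_le_one
      have hi_d2 : IntervalIntegrable (fun t : ℝ => ⟪gradient f (y + t • d), d⟫)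
          MeasureTheory.volume 0 1 := hcd2.intervalIntegrable_of_Icc zero_le_one
      have hi_w2 : IntervalIntegrable (fun t : ℝ => ⟪gradient f (y + t • d), w⟫)
          MeasureTheory.volume 0 1 := hcw2.intervalIntegrable_of_Icc zero_le_one
      have hψint : ∀ a b : ℝ, a ∈ Icc (-η) (1 + η) → b ∈ Icc (-η) (1 + η) →
          IntervalIntegrable (ψ s) MeasureTheory.volume a b := fun a b ha hb =>
        (hcψ.mono (ordConnected_Icc.uIcc_subset ha hb)).intervalIntegrable
      have mem0 : (0:ℝ) ∈ Icc (-η) (1 + η) := ⟨by linarith, by linarith⟩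
      have mems : s ∈ Icc (-η) (1 + η) := ⟨by linarith, by linarith⟩
      have mem1 : (1:ℝ) ∈ Icc (-η) (1 + η) := ⟨by linarith, by linarith⟩
      have mem1s : 1 + s ∈ Icc (-η) (1 + η) := ⟨by linarith, by linarith⟩
      -- pointwise nonnegativity
      have hpt1 : ∀ t ∈ Icc (0:ℝ) 1,
          0 ≤ (⟪gradient f (y + s • p + t • d), d⟫ - ⟪gradient f (y + t • d), d⟫)
            + l * (⟪gradient f (y + s • p + t • d), w⟫ - ⟪gradient f (y + t • d), w⟫) := by
        intro t ht
        have h := mono_lower hconv hfd (M1 t ht) (M2 t ht)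
        have e : (y + s • p + t • d) - (y + t • d) = s • d + (s * l) • w := by
          rw [hp]; module
        rw [e] at h
        simp only [inner_add_right, real_inner_smul_right, inner_sub_left] at h
        have h2 : s * 0 ≤ s * ((⟪gradient f (y + s • p + t • d), d⟫
            - ⟪gradient f (y + t • d), d⟫)
            + l * (⟪gradient f (y + s • p + t • d), w⟫ - ⟪gradient f (y + t • d), w⟫)) := by
          rw [mul_zero]
          nlinarith [h]
        exact le_of_mul_le_mul_left h2 hs0
      have hIpos : 0 ≤ ∫ t in (0:ℝ)..1,
          ((⟪gradient f (y + s • p + t • d), d⟫ - ⟪gradient f (y + t • d), d⟫)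
            + l * (⟪gradient f (y + s • p + t • d), w⟫ - ⟪gradient f (y + t • d), w⟫)) :=
        intervalIntegral.integral_nonneg zero_le_one hpt1
      have hsplit : (∫ t in (0:ℝ)..1,
          ((⟪gradient f (y + s • p + t • d), d⟫ - ⟪gradient f (y + t • d), d⟫)
            + l * (⟪gradient f (y + s • p + t • d), w⟫ - ⟪gradient f (y + t • d), w⟫)))
          = ((∫ t in (0:ℝ)..1, ⟪gradient f (y + s • p + t • d), d⟫)
              - ∫ t in (0:ℝ)..1, ⟪gradient f (y + t • d), d⟫)
            + l * ((∫ t in (0:ℝ)..1, ⟪gradient f (y + s • p + t • d), w⟫)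
              - ∫ t in (0:ℝ)..1, ⟪gradient f (y + t • d), w⟫) := by
        rw [intervalIntegral.integral_add (hi_d1.sub hi_d2) ((hi_w1.sub hi_w2).const_mul l),
          intervalIntegral.integral_sub hi_d1 hi_d2, intervalIntegral.integral_const_mul,
          intervalIntegral.integral_sub hi_w1 hi_w2]
      -- FTC
      have hftc1 : (∫ t in (0:ℝ)..1, ⟪gradient f (y + s • p + t • d), d⟫)
          = f (x + s • p) - f (y + s • p) := by
        have h := ftc hΩopen hf (base := y + s • p) (dir := d) zero_le_one M1
        have e1 : y + s • p + (1:ℝ) • d = x + s • p := by rw [hd]; module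
        have e0 : y + s • p + (0:ℝ) • d = y + s • p := by module
        rw [e1, e0] at h
        exact h
      have hftc2 : (∫ t in (0:ℝ)..1, ⟪gradient f (y + t • d), d⟫) = f x - f y := by
        have h := ftc hΩopen hf (base := y) (dir := d) zero_le_one M2
        have e1 : y + (1:ℝ) • d = x := by rw [hd]; module
        have e0 : y + (0:ℝ) • d = y := by module
        rw [e1, e0] at h
        exact h
      -- reindexing
      have hre : (∫ t in (0:ℝ)..1, ⟪gradient f (y + s • p + t • d), w⟫)
          = ∫ r in s..1 + s, ψ s r := by
        have hpt : ∀ t : ℝ, ⟪gradient f (y + s • p + t • d), w⟫ = ψ s (t + s) := by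
          intro t
          rw [hψ]
          exact congrArg (fun z => ⟪gradient f z, w⟫) (by rw [hp]; module)
        simp only [hpt]
        rw [intervalIntegral.integral_comp_add_right (ψ s) s, zero_add]
      have hadj1 : (∫ r in (0:ℝ)..s, ψ s r) + (∫ r in s..(1:ℝ), ψ s r)
          = ∫ r in (0:ℝ)..1, ψ s r :=
        intervalIntegral.integral_add_adjacent_intervals (hψint 0 s mem0 mems)
          (hψint s 1 mems mem1)
      have hadj2 : (∫ r in s..(1:ℝ), ψ s r) + (∫ r in (1:ℝ)..1 + s, ψ s r)
          = ∫ r in s..1 + s, ψ s r :=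
        intervalIntegral.integral_add_adjacent_intervals (hψint s 1 mems mem1)
          (hψint 1 (1 + s) mem1 mem1s)
      -- middle bound
      have hpt2 : ∀ t ∈ Icc (0:ℝ) 1,
          l * (ψ s t - ⟪gradient f (y + t • d), w⟫) ≤ β * s * l ^ 2 * ‖w‖ ^ 2 := by
        intro t ht
        have h := mono_upper hg hfd (M3 t (by linarith [ht.1]) (by linarith [ht.2])) (M2 t ht)
        have e : (y + t • d + (s * l) • w) - (y + t • d) = (s * l) • w := by module
        rw [e, real_inner_smul_right] at h
        have enorm : ‖(s * l) • w‖ ^ 2 = (s * l) ^ 2 * ‖w‖ ^ 2 := by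
          rw [norm_smul, mul_pow, Real.norm_eq_abs, sq_abs]
        rw [enorm] at h
        have eψ : ψ s t - ⟪gradient f (y + t • d), w⟫
            = ⟪gradient f (y + t • d + (s * l) • w) - gradient f (y + t • d), w⟫ := by
          rw [hψ, inner_sub_left]
        rw [eψ]
        have h2 : s * (l * ⟪gradient f (y + t • d + (s * l) • w) - gradient f (y + t • d), w⟫)
            ≤ s * (β * s * l ^ 2 * ‖w‖ ^ 2) := by nlinarith [h]
        exact le_of_mul_le_mul_left h2 hs0
      have hmid : l * ((∫ r in (0:ℝ)..1, ψ s r)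
          - ∫ t in (0:ℝ)..1, ⟪gradient f (y + t • d), w⟫) ≤ β * s * l ^ 2 * ‖w‖ ^ 2 := by
        have hiψ : IntervalIntegrable (ψ s) MeasureTheory.volume 0 1 := hψint 0 1 mem0 mem1
        have h1 : (∫ t in (0:ℝ)..1, l * (ψ s t - ⟪gradient f (y + t • d), w⟫))
            ≤ ∫ t in (0:ℝ)..1, β * s * l ^ 2 * ‖w‖ ^ 2 :=
          intervalIntegral.integral_mono_on zero_le_one
            ((hiψ.sub hi_w2).const_mul l) intervalIntegrable_const hpt2
        rw [intervalIntegral.integral_const_mul, intervalIntegral.integral_sub hiψ hi_w2,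
          intervalIntegral.integral_const] at h1
        simpa using h1
      -- combine everything
      have hIw1J : (∫ r in s..1 + s, ψ s r) - (∫ r in (0:ℝ)..1, ψ s r)
          = (∫ r in (1:ℝ)..1 + s, ψ s r) - (∫ r in (0:ℝ)..s, ψ s r) := by
        linarith [hadj1, hadj2]
      have hcomb : 0 ≤ (f (x + s • p) - f (y + s • p) - f x + f y)
          + l * ((∫ r in (1:ℝ)..1 + s, ψ s r) - (∫ r in (0:ℝ)..s, ψ s r))
          + β * s * l ^ 2 * ‖w‖ ^ 2 := by
        rw [hsplit, hftc1, hftc2, hre] at hIpos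
        have hr1 : l * ((∫ r in s..1 + s, ψ s r)
            - ∫ t in (0:ℝ)..1, ⟪gradient f (y + t • d), w⟫)
            = l * ((∫ r in s..1 + s, ψ s r) - (∫ r in (0:ℝ)..1, ψ s r))
              + l * ((∫ r in (0:ℝ)..1, ψ s r)
                - ∫ t in (0:ℝ)..1, ⟪gradient f (y + t • d), w⟫) := by ring
        have hr2 : l * ((∫ r in s..1 + s, ψ s r) - (∫ r in (0:ℝ)..1, ψ s r))
            = l * ((∫ r in (1:ℝ)..1 + s, ψ s r) - (∫ r in (0:ℝ)..s, ψ s r)) :=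
          congrArg (fun z => l * z) hIw1J
        nlinarith [hIpos, hmid, hr1, hr2]
      -- divide by s
      have hA1val : f (x + s • p) - f (y + s • p) - f x + f y = s * A1 s := by
        rw [hA1def]; field_simp; ring
      have hA2val : l * ((∫ r in (1:ℝ)..1 + s, ψ s r) - (∫ r in (0:ℝ)..s, ψ s r))
          = s * A2 s := by
        rw [hA2def]; simp only [zero_add]; field_simp
      rw [hA1val, hA2val] at hcomb
      have h2 : s * 0 ≤ s * (A1 s + A2 s + β * l ^ 2 * ‖w‖ ^ 2) := by
        rw [mul_zero]; nlinarith [hcomb]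
      exact le_of_mul_le_mul_left h2 hs0
    -- pass to the limit
    have hlim : Tendsto (fun s => A1 s + A2 s + β * l ^ 2 * ‖w‖ ^ 2) (𝓝[>] 0)
        (𝓝 ((⟪w, d⟫ + l * ‖w‖ ^ 2) + l * ‖w‖ ^ 2 + β * l ^ 2 * ‖w‖ ^ 2)) :=
      (hA1lim.add hA2lim).add tendsto_const_nhds
    have hge : (0:ℝ) ≤ (⟪w, d⟫ + l * ‖w‖ ^ 2) + l * ‖w‖ ^ 2 + β * l ^ 2 * ‖w‖ ^ 2 := by
      refine ge_of_tendsto hlim ?_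
      filter_upwards [Ioo_mem_nhdsGT_of_mem (⟨le_rfl, hηpos⟩ : (0:ℝ) ∈ Ico 0 η)] with s hs
      exact hev s hs
    linarith
  -- discriminant argument
  have hwn : 0 < ‖w‖ := norm_pos_iff.mpr hw0
  have hwsq : 0 < ‖w‖ ^ 2 := pow_pos hwn 2
  have hdis := discrim_le_zero (a := β * ‖w‖ ^ 2) (b := 2 * ‖w‖ ^ 2) (c := ⟪w, d⟫)
    (fun z => by have := claim z; nlinarith [this])
  rw [discrim] at hdis
  rw [ge_iff_le]
  nlinarith [hdis, hwsq]


end Main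

theorem convexity_difference_iff_cocoercive
    {n : ℕ} (Ω : Set (EuclideanSpace ℝ (Fin n)))
    (hΩne : Ω.Nonempty) (hΩopen : IsOpen Ω) (hΩconv : Convex ℝ Ω)
    (f : EuclideanSpace ℝ (Fin n) → ℝ)
    (hconv : ConvexOn ℝ Ω f)
    (hf : ContDiffOn ℝ 1 f Ω)
    (hloc : ∀ x ∈ Ω, ∃ s ∈ nhds x, ∃ K : NNReal, LipschitzOnWith K (gradient f) s)
    (β : ℝ) (hβ : 0 < β) :
    ConvexOn ℝ Ω (fun x => β / 2 * ‖x‖ ^ 2 - f x) ↔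
      (∀ x ∈ Ω, ∀ y ∈ Ω,
        β * ⟪gradient f x - gradient f y, x - y⟫ ≥ ‖gradient f x - gradient f y‖ ^ 2) := by
  constructor
  · intro hg
    exact coco_forward hΩopen hΩconv hconv hf hβ hg
  · intro hco
    exact coco_backward hΩopen hΩconv hf hβ hco
end

section
/- Let Ω ⊆ ℝⁿ be a nonempty open convex set, f : Ω → ℝ a convex C¹ function with locally Lipschitz gradient, and β > 0. Then ∇f is β-Lipschitz on Ω if and only if ∇f is 1/β-cocoercive on Ω. -/
open scoped RealInnerProductSpace
open Metric Finset

variable {n : ℕ}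

/-- Derivative of `f` along a line, in terms of the gradient. -/
lemma aux_hasDerivAt_line {f : EuclideanSpace ℝ (Fin n) → ℝ} {u w : EuclideanSpace ℝ (Fin n)}
    {t : ℝ} (hd : DifferentiableAt ℝ f (u + t • (w - u))) :
    HasDerivAt (fun s : ℝ => f (u + s • (w - u)))
      ⟪gradient f (u + t • (w - u)), w - u⟫ t := by
  have hγ : HasDerivAt (fun s : ℝ => u + s • (w - u)) (w - u) t := by
    simpa using ((hasDerivAt_id t).smul_const (w - u)).const_add u
  have hg : HasGradientAt f (gradient f (u + t • (w - u))) (u + t • (w - u)) := hd.hasGradientAt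
  rw [hasGradientAt_iff_hasFDerivAt] at hg
  have := hg.comp_hasDerivAt t hγ
  simpa [InnerProductSpace.toDual_apply_apply, Function.comp_def] using this

/-- Gradient inequality for a convex differentiable function. -/
lemma aux_grad_ineq {Ω : Set (EuclideanSpace ℝ (Fin n))} (hΩopen : IsOpen Ω)
    {f : EuclideanSpace ℝ (Fin n) → ℝ} (hconv : ConvexOn ℝ Ω f)
    (hdiff : ∀ z ∈ Ω, DifferentiableAt ℝ f z)
    {u w : EuclideanSpace ℝ (Fin n)} (hu : u ∈ Ω) (hw : w ∈ Ω) :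
    f u + ⟪gradient f u, w - u⟫ ≤ f w := by
  set A : ℝ →ᵃ[ℝ] EuclideanSpace ℝ (Fin n) := AffineMap.lineMap u w with hA
  have hAapp : ∀ s : ℝ, A s = u + s • (w - u) := by
    intro s
    simp [hA, AffineMap.lineMap_apply]
    abel
  have hq : ConvexOn ℝ (A ⁻¹' Ω) (f ∘ A) := hconv.comp_affineMap A
  have h0 : (0 : ℝ) ∈ A ⁻¹' Ω := by simp [Set.mem_preimage, hAapp 0]; simpa using hu
  have h1 : (1 : ℝ) ∈ A ⁻¹' Ω := by simp [Set.mem_preimage, hAapp 1]; simpa using hw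
  have hder : HasDerivAt (f ∘ A) ⟪gradient f u, w - u⟫ 0 := by
    have := aux_hasDerivAt_line (f := f) (u := u) (w := w) (t := 0)
      (by simpa using hdiff u hu)
    have heq : (f ∘ A) = fun s : ℝ => f (u + s • (w - u)) := by
      funext s; simp [Function.comp, hAapp s]
    rw [heq]
    simpa using this
  have := hq.le_slope_of_hasDerivAt h0 h1 one_pos.{0} hder
  rw [slope_def_field] at this
  have e0 : (f ∘ A) 0 = f u := by simp [Function.comp, hAapp 0]
  have e1 : (f ∘ A) 1 = f w := by
    have : A 1 = w := by rw [hAapp 1]; simp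
    simp [Function.comp, this]
  rw [e0, e1] at this
  simp only [div_one, sub_zero] at this
  linarith

/-- Descent lemma: quadratic upper bound along a segment where the gradient is β-Lipschitz. -/
lemma aux_descent {Ω : Set (EuclideanSpace ℝ (Fin n))} (hΩopen : IsOpen Ω)
    (hΩconv : Convex ℝ Ω)
    {f : EuclideanSpace ℝ (Fin n) → ℝ} {β : ℝ} (hβ : 0 < β)
    (hdiff : ∀ z ∈ Ω, DifferentiableAt ℝ f z)
    (hlip : ∀ x ∈ Ω, ∀ y ∈ Ω, ‖gradient f x - gradient f y‖ ≤ β * ‖x - y‖)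
    {u w : EuclideanSpace ℝ (Fin n)} (hu : u ∈ Ω) (hw : w ∈ Ω) :
    f w ≤ f u + ⟪gradient f u, w - u⟫ + β / 2 * ‖w - u‖ ^ 2 := by
  set H : ℝ → ℝ := fun t =>
    f (u + t • (w - u)) - t * ⟪gradient f u, w - u⟫ - β / 2 * t ^ 2 * ‖w - u‖ ^ 2 with hH
  have hmem : ∀ t ∈ Set.Icc (0:ℝ) 1, u + t • (w - u) ∈ Ω := fun t ht =>
    hΩconv.add_smul_sub_mem hu hw ht
  have hder : ∀ t ∈ Set.Icc (0:ℝ) 1, HasDerivAt H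
      (⟪gradient f (u + t • (w - u)), w - u⟫ - ⟪gradient f u, w - u⟫
        - β * t * ‖w - u‖ ^ 2) t := by
    intro t ht
    have h1 := aux_hasDerivAt_line (f := f) (u := u) (w := w) (t := t)
      (hdiff _ (hmem t ht))
    have h2 : HasDerivAt (fun t : ℝ => t * ⟪gradient f u, w - u⟫)
        ⟪gradient f u, w - u⟫ t := by simpa using (hasDerivAt_id t).mul_const _
    have h3 : HasDerivAt (fun t : ℝ => β / 2 * t ^ 2 * ‖w - u‖ ^ 2)
        (β * t * ‖w - u‖ ^ 2) t := by
      have : HasDerivAt (fun t : ℝ => t ^ 2) (2 * t) t := by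
        simpa using hasDerivAt_pow 2 t
      have := (this.const_mul (β / 2)).mul_const (‖w - u‖ ^ 2)
      convert this using 1
      · rfl
      · rfl
      · ring
    simpa [hH, Pi.sub_def] using (h1.sub h2).sub h3
  have hanti : AntitoneOn H (Set.Icc (0:ℝ) 1) := by
    apply antitoneOn_of_deriv_nonpos (convex_Icc 0 1)
    · exact fun t ht => ((hder t ht).continuousAt).continuousWithinAt
    · rw [interior_Icc]
      exact fun t ht => ((hder t (Set.mem_Icc_of_Ioo ht)).differentiableAt).differentiableWithinAt
    · rw [interior_Icc]
      intro t ht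
      rw [(hder t (Set.mem_Icc_of_Ioo ht)).deriv]
      have hmem' := hmem t (Set.mem_Icc_of_Ioo ht)
      have hIP : ⟪gradient f (u + t • (w - u)) - gradient f u, w - u⟫
          ≤ ‖gradient f (u + t • (w - u)) - gradient f u‖ * ‖w - u‖ :=
        real_inner_le_norm _ _
      have hL := hlip _ hmem' u hu
      have hnorm : ‖(u + t • (w - u)) - u‖ = t * ‖w - u‖ := by
        simp [norm_smul, abs_of_pos ht.1]
      rw [hnorm] at hL
      have hsub : ⟪gradient f (u + t • (w - u)) - gradient f u, w - u⟫
          = ⟪gradient f (u + t • (w - u)), w - u⟫ - ⟪gradient f u, w - u⟫ :=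
        inner_sub_left _ _ _
      nlinarith [norm_nonneg (w - u), norm_nonneg (gradient f (u + t • (w - u)) - gradient f u),
        mul_le_mul_of_nonneg_right hL (norm_nonneg (w - u))]
  have h10 := hanti (by norm_num : (0:ℝ) ∈ Set.Icc (0:ℝ) 1)
    (by norm_num : (1:ℝ) ∈ Set.Icc (0:ℝ) 1) zero_le_one
  have e1 : u + (1:ℝ) • (w - u) = w := by simp
  have e0 : u + (0:ℝ) • (w - u) = u := by simp
  simp only [hH, e1, e0] at h10
  have h10' : f w - 1 * ⟪gradient f u, w - u⟫ - β / 2 * 1 ^ 2 * ‖w - u‖ ^ 2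
      ≤ f u - 0 * ⟪gradient f u, w - u⟫ - β / 2 * 0 ^ 2 * ‖w - u‖ ^ 2 := h10
  nlinarith [h10']

/-- One-sided quadratic lower bound, valid when a ball around the two points is in Ω. -/
lemma aux_lower {Ω : Set (EuclideanSpace ℝ (Fin n))} (hΩopen : IsOpen Ω)
    (hΩconv : Convex ℝ Ω)
    {f : EuclideanSpace ℝ (Fin n) → ℝ} {β : ℝ} (hβ : 0 < β)
    (hconv : ConvexOn ℝ Ω f)
    (hdiff : ∀ z ∈ Ω, DifferentiableAt ℝ f z)
    (hlip : ∀ x ∈ Ω, ∀ y ∈ Ω, ‖gradient f x - gradient f y‖ ≤ β * ‖x - y‖)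
    {p a b : EuclideanSpace ℝ (Fin n)} {r : ℝ}
    (hball : Metric.ball p r ⊆ Ω)
    (ha : a ∈ Metric.closedBall p (r / 4)) (hb : b ∈ Metric.closedBall p (r / 4))
    (hr : 0 < r) :
    f a + ⟪gradient f a, b - a⟫ + 1 / (2 * β) * ‖gradient f b - gradient f a‖ ^ 2 ≤ f b := by
  have hsub : Metric.closedBall p (r / 4) ⊆ Ω := fun z hz =>
    hball (lt_of_le_of_lt (Metric.mem_closedBall.mp hz) (by linarith) : dist z p < r)
  have haΩ : a ∈ Ω := hsub ha
  have hbΩ : b ∈ Ω := hsub hb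
  set w : EuclideanSpace ℝ (Fin n) := gradient f b - gradient f a with hw
  set z : EuclideanSpace ℝ (Fin n) := b - β⁻¹ • w with hz
  have hwnorm : ‖w‖ ≤ β * ‖b - a‖ := hlip b hbΩ a haΩ
  have hzΩ : z ∈ Ω := by
    apply hball
    rw [Metric.mem_ball, dist_eq_norm]
    have h1 : ‖z - p‖ ≤ ‖b - p‖ + β⁻¹ * ‖w‖ := by
      have : z - p = (b - p) + (-(β⁻¹ • w)) := by rw [hz]; abel
      rw [this]
      calc ‖(b - p) + (-(β⁻¹ • w))‖ ≤ ‖b - p‖ + ‖-(β⁻¹ • w)‖ := norm_add_le _ _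
        _ = ‖b - p‖ + β⁻¹ * ‖w‖ := by
            rw [norm_neg, norm_smul, Real.norm_eq_abs, abs_of_pos (inv_pos.mpr hβ)]
    have h2 : β⁻¹ * ‖w‖ ≤ ‖b - a‖ := by
      rw [inv_mul_le_iff₀ hβ] at *
      · exact hwnorm
    have h3 : ‖b - a‖ ≤ ‖b - p‖ + ‖p - a‖ := norm_sub_le_norm_sub_add_norm_sub b p a
    have hbp : ‖b - p‖ ≤ r / 4 := by rw [← dist_eq_norm]; exact hb
    have hpa : ‖p - a‖ ≤ r / 4 := by rw [← dist_eq_norm, dist_comm]; exact ha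
    calc ‖z - p‖ ≤ ‖b - p‖ + β⁻¹ * ‖w‖ := h1
      _ ≤ r / 4 + (r / 4 + r / 4) := by linarith
      _ < r := by linarith
  -- gradient inequality from a to z
  have hA := aux_grad_ineq hΩopen hconv hdiff haΩ hzΩ
  -- descent from b to z
  have hB := aux_descent hΩopen hΩconv hβ hdiff hlip hbΩ hzΩ
  -- algebra
  have e1 : z - b = -(β⁻¹ • w) := by rw [hz]; abel
  have e2 : ⟪gradient f b, z - b⟫ = -(β⁻¹ * ⟪gradient f b, w⟫) := by
    rw [e1, inner_neg_right, real_inner_smul_right]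
  have e3 : ‖z - b‖ ^ 2 = β⁻¹ ^ 2 * ‖w‖ ^ 2 := by
    rw [e1, norm_neg, norm_smul, Real.norm_eq_abs, abs_of_pos (inv_pos.mpr hβ), mul_pow]
  have e4 : ⟪gradient f a, z - a⟫ = ⟪gradient f a, b - a⟫ - β⁻¹ * ⟪gradient f a, w⟫ := by
    have : z - a = (b - a) - β⁻¹ • w := by rw [hz]; abel
    rw [this, inner_sub_right, real_inner_smul_right]
  have e5 : ⟪gradient f b, w⟫ - ⟪gradient f a, w⟫ = ‖w‖ ^ 2 := by
    rw [← inner_sub_left, hw, real_inner_self_eq_norm_sq]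
  rw [e2, e3] at hB
  rw [e4] at hA
  have hβ' : (0:ℝ) < β⁻¹ := inv_pos.mpr hβ
  have hfield : β / 2 * (β⁻¹ ^ 2 * ‖w‖ ^ 2) = 1 / (2 * β) * ‖w‖ ^ 2 := by
    field_simp
  rw [hfield] at hB
  have hinv : β⁻¹ * ⟪gradient f b, w⟫ - β⁻¹ * ⟪gradient f a, w⟫ = β⁻¹ * ‖w‖ ^ 2 := by
    rw [← mul_sub, e5]
  have hinv2 : β⁻¹ * ‖w‖ ^ 2 - 1 / (2 * β) * ‖w‖ ^ 2 = 1 / (2 * β) * ‖w‖ ^ 2 := by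
    field_simp; ring
  linarith

/-- Local cocoercivity. -/
lemma aux_local_coco {Ω : Set (EuclideanSpace ℝ (Fin n))} (hΩopen : IsOpen Ω)
    (hΩconv : Convex ℝ Ω)
    {f : EuclideanSpace ℝ (Fin n) → ℝ} {β : ℝ} (hβ : 0 < β)
    (hconv : ConvexOn ℝ Ω f)
    (hdiff : ∀ z ∈ Ω, DifferentiableAt ℝ f z)
    (hlip : ∀ x ∈ Ω, ∀ y ∈ Ω, ‖gradient f x - gradient f y‖ ≤ β * ‖x - y‖)
    {p a b : EuclideanSpace ℝ (Fin n)} {r : ℝ}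
    (hball : Metric.ball p r ⊆ Ω)
    (ha : a ∈ Metric.closedBall p (r / 4)) (hb : b ∈ Metric.closedBall p (r / 4))
    (hr : 0 < r) :
    ‖gradient f b - gradient f a‖ ^ 2 ≤ β * ⟪gradient f b - gradient f a, b - a⟫ := by
  have h1 := aux_lower hΩopen hΩconv hβ hconv hdiff hlip hball ha hb hr
  have h2 := aux_lower hΩopen hΩconv hβ hconv hdiff hlip hball hb ha hr
  have e1 : ‖gradient f a - gradient f b‖ = ‖gradient f b - gradient f a‖ := norm_sub_rev _ _
  rw [e1] at h2
  have e2 : ⟪gradient f b - gradient f a, b - a⟫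
      = ⟪gradient f b, b - a⟫ - ⟪gradient f a, b - a⟫ := inner_sub_left _ _ _
  have e3 : ⟪gradient f b, a - b⟫ = -⟪gradient f b, b - a⟫ := by
    rw [← inner_neg_right]; congr 1; abel
  rw [e3] at h2
  have hβ2 : (0:ℝ) < 1 / (2 * β) := by positivity
  have key : 2 * (1 / (2 * β)) * ‖gradient f b - gradient f a‖ ^ 2
      ≤ ⟪gradient f b, b - a⟫ - ⟪gradient f a, b - a⟫ := by linarith
  rw [e2]
  have : 2 * (1 / (2 * β)) = β⁻¹ := by field_simp
  rw [this] at key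
  calc ‖gradient f b - gradient f a‖ ^ 2
      = β * (β⁻¹ * ‖gradient f b - gradient f a‖ ^ 2) := by field_simp
    _ ≤ β * (⟪gradient f b, b - a⟫ - ⟪gradient f a, b - a⟫) :=
        mul_le_mul_of_nonneg_left key hβ.le

/-- Global cocoercivity by chaining along the segment. -/
lemma aux_global_coco {Ω : Set (EuclideanSpace ℝ (Fin n))} (hΩopen : IsOpen Ω)
    (hΩconv : Convex ℝ Ω)
    {f : EuclideanSpace ℝ (Fin n) → ℝ} {β : ℝ} (hβ : 0 < β)
    (hconv : ConvexOn ℝ Ω f)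
    (hdiff : ∀ z ∈ Ω, DifferentiableAt ℝ f z)
    (hlip : ∀ x ∈ Ω, ∀ y ∈ Ω, ‖gradient f x - gradient f y‖ ≤ β * ‖x - y‖)
    {x y : EuclideanSpace ℝ (Fin n)} (hx : x ∈ Ω) (hy : y ∈ Ω) :
    ‖gradient f y - gradient f x‖ ^ 2 ≤ β * ⟪gradient f y - gradient f x, y - x⟫ := by
  rcases eq_or_ne x y with rfl | hxy
  · simp
  -- thickening of the segment
  have hKcomp : IsCompact (segment ℝ x y) := by
    rw [segment_eq_image']
    exact isCompact_Icc.image (by continuity)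
  have hKΩ : segment ℝ x y ⊆ Ω := hΩconv.segment_subset hx hy
  obtain ⟨δ, hδpos, hδ⟩ := hKcomp.exists_thickening_subset_open hΩopen hKΩ
  have hballs : ∀ z ∈ segment ℝ x y, Metric.ball z δ ⊆ Ω := fun z hz =>
    (Metric.ball_subset_thickening hz δ).trans hδ
  -- choose N
  obtain ⟨N, hN⟩ := exists_nat_gt (4 * ‖y - x‖ / δ)
  have hN0 : 0 < N := by
    by_contra h
    push_neg at h
    interval_cases N
    · simp at hN
      have : 0 ≤ 4 * ‖y - x‖ / δ := by positivity
      linarith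
  have hNR : (0:ℝ) < N := Nat.cast_pos.mpr hN0
  have hstepsize : ‖y - x‖ / N ≤ δ / 4 := by
    rw [div_le_div_iff₀ hNR (by norm_num : (0:ℝ) < 4)]
    rw [div_lt_iff₀ hδpos] at hN
    linarith
  set γ : ℕ → EuclideanSpace ℝ (Fin n) := fun i => x + ((i : ℝ) / N) • (y - x) with hγ
  have hγK : ∀ i : ℕ, i ≤ N → γ i ∈ segment ℝ x y := by
    intro i hi
    rw [segment_eq_image']
    exact ⟨(i : ℝ) / N, ⟨by positivity,
      by rw [div_le_one hNR]; exact_mod_cast hi⟩, rfl⟩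
  have hγ0 : γ 0 = x := by simp [hγ]
  have hγN : γ N = y := by
    simp only [hγ, div_self hNR.ne']
    simp
  have hstep : ∀ i : ℕ, γ (i + 1) - γ i = ((1:ℝ) / N) • (y - x) := by
    intro i
    simp only [hγ]
    rw [add_sub_add_left_eq_sub, ← sub_smul]
    congr 1
    push_cast
    field_simp
    ring
  have hstepnorm : ∀ i : ℕ, ‖γ (i + 1) - γ i‖ ≤ δ / 4 := by
    intro i
    rw [hstep i, norm_smul, Real.norm_eq_abs, abs_of_pos (by positivity : (0:ℝ) < 1 / N)]
    calc (1 / (N:ℝ)) * ‖y - x‖ = ‖y - x‖ / N := by ring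
      _ ≤ δ / 4 := hstepsize
  set v : ℕ → EuclideanSpace ℝ (Fin n) :=
    fun i => gradient f (γ (i + 1)) - gradient f (γ i) with hv
  have hlocal : ∀ i : ℕ, i < N →
      ‖v i‖ ^ 2 ≤ β * (1 / N) * ⟪v i, y - x⟫ := by
    intro i hi
    have h1 := aux_local_coco hΩopen hΩconv hβ hconv hdiff hlip
      (hballs (γ i) (hγK i hi.le))
      (Metric.mem_closedBall_self (by positivity))
      (by rw [Metric.mem_closedBall, dist_eq_norm]; exact hstepnorm i)
      hδpos
    calc ‖v i‖ ^ 2 ≤ β * ⟪v i, γ (i + 1) - γ i⟫ := h1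
      _ = β * (1 / N) * ⟪v i, y - x⟫ := by
          rw [hstep i, real_inner_smul_right]; ring
  -- telescoping
  have htel : ∑ i ∈ Finset.range N, v i = gradient f y - gradient f x := by
    rw [hv]
    rw [Finset.sum_range_sub (fun i => gradient f (γ i))]
    rw [hγ0, hγN]
  have hsum1 : ∑ i ∈ Finset.range N, ‖v i‖ ^ 2
      ≤ β * (1 / N) * ⟪gradient f y - gradient f x, y - x⟫ := by
    rw [← htel, sum_inner, Finset.mul_sum]
    exact Finset.sum_le_sum fun i hi => hlocal i (Finset.mem_range.mp hi)
  have hsum2 : ‖gradient f y - gradient f x‖ ≤ ∑ i ∈ Finset.range N, ‖v i‖ := by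
    rw [← htel]
    exact norm_sum_le _ _
  have hcs : (∑ i ∈ Finset.range N, ‖v i‖) ^ 2
      ≤ N * ∑ i ∈ Finset.range N, ‖v i‖ ^ 2 := by
    have := sq_sum_le_card_mul_sum_sq (s := Finset.range N) (f := fun i => ‖v i‖)
    simpa using this
  have hfinal : ‖gradient f y - gradient f x‖ ^ 2
      ≤ (∑ i ∈ Finset.range N, ‖v i‖) ^ 2 := by
    apply pow_le_pow_left₀ (norm_nonneg _) hsum2
  calc ‖gradient f y - gradient f x‖ ^ 2
      ≤ (∑ i ∈ Finset.range N, ‖v i‖) ^ 2 := hfinal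
    _ ≤ N * ∑ i ∈ Finset.range N, ‖v i‖ ^ 2 := hcs
    _ ≤ N * (β * (1 / N) * ⟪gradient f y - gradient f x, y - x⟫) :=
        mul_le_mul_of_nonneg_left hsum1 hNR.le
    _ = β * ⟪gradient f y - gradient f x, y - x⟫ := by field_simp

theorem grad_lipschitz_iff_cocoercive_finiteDim
    {n : ℕ} (Ω : Set (EuclideanSpace ℝ (Fin n)))
    (hΩne : Ω.Nonempty) (hΩopen : IsOpen Ω) (hΩconv : Convex ℝ Ω)
    (f : EuclideanSpace ℝ (Fin n) → ℝ)
    (hconv : ConvexOn ℝ Ω f)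
    (hf : ContDiffOn ℝ 1 f Ω)
    (hloc : ∀ x ∈ Ω, ∃ s ∈ nhds x, ∃ K : NNReal, LipschitzOnWith K (gradient f) s)
    (β : ℝ) (hβ : 0 < β) :
    (∀ x ∈ Ω, ∀ y ∈ Ω, ‖gradient f x - gradient f y‖ ≤ β * ‖x - y‖) ↔
      (∀ x ∈ Ω, ∀ y ∈ Ω,
        β * ⟪gradient f x - gradient f y, x - y⟫ ≥ ‖gradient f x - gradient f y‖ ^ 2) := by
  have hdiff : ∀ z ∈ Ω, DifferentiableAt ℝ f z := fun z hz =>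
    (hf.contDiffAt (hΩopen.mem_nhds hz)).differentiableAt one_ne_zero
  constructor
  · intro hlip x hx y hy
    have h := aux_global_coco hΩopen hΩconv hβ hconv hdiff hlip hy hx
    exact h
  · intro hco x hx y hy
    have h := hco x hx y hy
    have hCS : ⟪gradient f x - gradient f y, x - y⟫
        ≤ ‖gradient f x - gradient f y‖ * ‖x - y‖ := real_inner_le_norm _ _
    rcases eq_or_lt_of_le (norm_nonneg (gradient f x - gradient f y)) with h0 | h0
    · rw [← h0]
      positivity
    · have h2 : ‖gradient f x - gradient f y‖ ^ 2
          ≤ β * (‖gradient f x - gradient f y‖ * ‖x - y‖) := by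
        calc ‖gradient f x - gradient f y‖ ^ 2
            ≤ β * ⟪gradient f x - gradient f y, x - y⟫ := h
          _ ≤ β * (‖gradient f x - gradient f y‖ * ‖x - y‖) :=
              mul_le_mul_of_nonneg_left hCS hβ.le
      rw [pow_two] at h2
      nlinarith [h2, h0]
end

section
/- Let Ω ⊆ ℝⁿ be a nonempty open convex set, f : Ω → ℝ convex, and β > 0. If the function h(x) := (β/2)‖x‖² − f(x) is convex on Ω, then f is differentiable at every point of Ω. -/
open Set Finset RealInnerProductSpace

set_option maxHeartbeats 1000000

theorem convexity_difference_implies_differentiable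
    {n : ℕ} (Ω : Set (EuclideanSpace ℝ (Fin n)))
    (hΩne : Ω.Nonempty) (hΩopen : IsOpen Ω) (hΩconv : Convex ℝ Ω)
    (f : EuclideanSpace ℝ (Fin n) → ℝ)
    (hconv : ConvexOn ℝ Ω f)
    (β : ℝ) (hβ : 0 < β)
    (hh : ConvexOn ℝ Ω (fun x => β / 2 * ‖x‖ ^ 2 - f x)) :
    ∀ x ∈ Ω, DifferentiableAt ℝ f x := by
  intro x hx
  rcases Nat.eq_zero_or_pos n with hn | hn
  · subst hn
    haveI : Subsingleton (EuclideanSpace ℝ (Fin 0)) :=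
      ⟨fun a b => PiLp.ext fun i => i.elim0⟩
    have hf : f = fun _ => f x := funext fun y => by rw [Subsingleton.elim y x]
    rw [hf]; exact differentiableAt_const _
  have hn1 : (1:ℝ) ≤ (n:ℝ) := by exact_mod_cast hn
  have hnpos : (0:ℝ) < n := by linarith
  obtain ⟨ε, εpos, hball⟩ := Metric.isOpen_iff.1 hΩopen x hx
  set r : ℝ := ε / 2 with hrdef
  have hrpos : 0 < r := by positivity
  -- membership of small perturbations
  have hmem : ∀ d : EuclideanSpace ℝ (Fin n), ‖d‖ ≤ r → x + d ∈ Ω := by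
    intro d hd
    apply hball
    rw [Metric.mem_ball, dist_eq_norm, add_sub_cancel_left]
    have : r < ε := by rw [hrdef]; linarith
    linarith
  -- symmetric second difference bound
  have hsym : ∀ d : EuclideanSpace ℝ (Fin n), ‖d‖ ≤ r →
      f (x + d) + f (x - d) - 2 * f x ≤ β * ‖d‖ ^ 2 := by
    intro d hd
    have h1 : x + d ∈ Ω := hmem d hd
    have h2 : x - d ∈ Ω := by
      have := hmem (-d) (by simpa using hd)
      simpa [sub_eq_add_neg] using this
    have hmid := hh.2 h1 h2 (by norm_num : (0:ℝ) ≤ 1/2) (by norm_num : (0:ℝ) ≤ 1/2)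
      (by norm_num)
    have hpt : (1/2 : ℝ) • (x + d) + (1/2 : ℝ) • (x - d) = x := by module
    rw [hpt] at hmid
    simp only [smul_eq_mul] at hmid
    have hpar : ‖x + d‖ ^ 2 + ‖x - d‖ ^ 2 = 2 * ‖x‖ ^ 2 + 2 * ‖d‖ ^ 2 := by
      have h3 := norm_add_sq_real x d
      have h4 := norm_sub_sq_real x d
      linarith
    nlinarith [hmid, hpar]
  -- coordinate directions
  set e : Fin n → EuclideanSpace ℝ (Fin n) := fun i => EuclideanSpace.single i (1:ℝ)
    with hedef
  have hnorme : ∀ i, ‖e i‖ = 1 := by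
    intro i; rw [hedef]; simp [EuclideanSpace.norm_single]
  have hmemt : ∀ (i : Fin n) (t : ℝ), |t| ≤ r → x + t • e i ∈ Ω := by
    intro i t ht
    apply hmem
    rw [norm_smul, hnorme i, mul_one, Real.norm_eq_abs]
    exact ht
  -- convexity along each line
  have hge : ∀ i : Fin n, ConvexOn ℝ (Icc (-r) r) (fun t : ℝ => f (x + t • e i)) := by
    intro i
    refine ⟨convex_Icc _ _, ?_⟩
    intro s hs t ht a b ha hb hab
    have hxs : x + s • e i ∈ Ω := hmemt i s (abs_le.2 ⟨hs.1, hs.2⟩)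
    have hxt : x + t • e i ∈ Ω := hmemt i t (abs_le.2 ⟨ht.1, ht.2⟩)
    have hcomb : a • (x + s • e i) + b • (x + t • e i)
        = (a + b) • x + (a * s + b * t) • e i := by module
    rw [hab, one_smul] at hcomb
    have := hconv.2 hxs hxt ha hb hab
    rw [hcomb] at this
    simpa [smul_eq_mul] using this
  -- difference quotients
  set q : Fin n → ℝ → ℝ := fun i t => (f (x + t • e i) - f x) / t with hqdef
  have hqmono : ∀ (i : Fin n) {s t : ℝ}, s ∈ Icc (-r) r → t ∈ Icc (-r) r →
      s ≠ 0 → t ≠ 0 → s ≤ t → q i s ≤ q i t := by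
    intro i s t hs ht hs0 ht0 hst
    have h0 : (0:ℝ) ∈ Icc (-r) r := ⟨by linarith, by linarith⟩
    have := (hge i).secant_mono h0 hs ht hs0 ht0 hst
    simpa [hqdef, zero_smul, add_zero, sub_zero] using this
  -- the candidate gradient
  set u : EuclideanSpace ℝ (Fin n) := WithLp.toLp 2 (fun i => sInf (q i '' Ioc 0 r)) with hudef
  have hrIcc : ∀ t : ℝ, t ∈ Ioc 0 r → t ∈ Icc (-r) r := by
    intro t ht; exact ⟨by linarith [ht.1], ht.2⟩
  have hnegIcc : ∀ t : ℝ, t ∈ Ico (-r) 0 → t ∈ Icc (-r) r := by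
    intro t ht; exact ⟨ht.1, by linarith [ht.2]⟩
  have hSne : ∀ i, (q i '' Ioc 0 r).Nonempty :=
    fun i => ⟨q i r, ⟨r, ⟨hrpos, le_refl r⟩, rfl⟩⟩
  have hSbdd : ∀ i, q i (-r) ∈ lowerBounds (q i '' Ioc 0 r) := by
    intro i y hy
    obtain ⟨t, ht, rfl⟩ := hy
    exact hqmono i (hnegIcc _ ⟨le_refl _, by linarith⟩) (hrIcc _ ht)
      (neg_ne_zero.2 hrpos.ne') (ne_of_gt ht.1) (by linarith [ht.1])
  have hle : ∀ (i : Fin n) (t : ℝ), t ∈ Ioc 0 r → u i ≤ q i t := by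
    intro i t ht
    exact csInf_le ⟨_, hSbdd i⟩ ⟨t, ht, rfl⟩
  have hge' : ∀ (i : Fin n) (t : ℝ), t ∈ Ico (-r) 0 → q i t ≤ u i := by
    intro i t ht
    refine le_csInf (hSne i) ?_
    rintro y ⟨s, hs, rfl⟩
    exact hqmono i (hnegIcc _ ht) (hrIcc _ hs) (ne_of_lt ht.2) (ne_of_gt hs.1)
      (by linarith [ht.2, hs.1])
  -- 1-D lower bound (subgradient along lines)
  have hLo : ∀ (i : Fin n) (t : ℝ), |t| ≤ r → u i * t ≤ f (x + t • e i) - f x := by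
    intro i t ht
    rcases lt_trichotomy t 0 with h | h | h
    · have hq : q i t ≤ u i := hge' i t ⟨(abs_le.1 ht).1, h⟩
      have heq : q i t * t = f (x + t • e i) - f x := by
        rw [hqdef]; exact div_mul_cancel₀ _ h.ne
      exact (mul_le_mul_of_nonpos_right hq h.le).trans_eq heq
    · subst h; simp
    · have hq : u i ≤ q i t := hle i t ⟨h, (abs_le.1 ht).2⟩
      have heq : q i t * t = f (x + t • e i) - f x := by
        rw [hqdef]; exact div_mul_cancel₀ _ h.ne'
      exact (mul_le_mul_of_nonneg_right hq h.le).trans_eq heq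
  -- 1-D upper bound
  have hU : ∀ (i : Fin n) (t : ℝ), |t| ≤ r → f (x + t • e i) - f x ≤ u i * t + β * t ^ 2 := by
    intro i t ht
    have hsy := hsym (t • e i) (by rw [norm_smul, hnorme i, mul_one, Real.norm_eq_abs]; exact ht)
    have hxe : x - t • e i = x + (-t) • e i := by module
    rw [hxe] at hsy
    have hlo := hLo i (-t) (by rwa [abs_neg])
    have hnt : ‖t • e i‖ ^ 2 = t ^ 2 := by
      rw [norm_smul, hnorme i, mul_one, Real.norm_eq_abs, sq_abs]
    rw [hnt] at hsy
    nlinarith [hsy, hlo]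
  -- coordinates are bounded by the norm
  have habs : ∀ (d : EuclideanSpace ℝ (Fin n)) (i : Fin n), |d i| ≤ ‖d‖ := by
    intro d i
    have h2 : |d i| ^ 2 ≤ ‖d‖ ^ 2 := by
      rw [EuclideanSpace.norm_eq d, Real.sq_sqrt (by positivity)]
      calc |d i| ^ 2 = ‖d i‖ ^ 2 := by rw [Real.norm_eq_abs]
      _ ≤ ∑ j, ‖d j‖ ^ 2 :=
        Finset.single_le_sum (f := fun j => ‖d j‖ ^ 2) (fun j _ => by positivity)
          (Finset.mem_univ i)
    exact le_of_pow_le_pow_left₀ two_ne_zero (norm_nonneg d) h2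
  have hinner : ∀ d : EuclideanSpace ℝ (Fin n), ⟪u, d⟫ = ∑ i, u i * d i := by
    intro d; simp [PiLp.inner_apply, RCLike.inner_apply, conj_trivial, mul_comm]
  have hnormsq : ∀ d : EuclideanSpace ℝ (Fin n), ‖d‖ ^ 2 = ∑ i, d i ^ 2 := by
    intro d
    rw [← real_inner_self_eq_norm_sq]
    rw [PiLp.inner_apply]; simp only [RCLike.inner_apply, conj_trivial, sq]
  -- upper bound in all directions
  have hUall : ∀ d : EuclideanSpace ℝ (Fin n), ‖d‖ ≤ r / n →
      f (x + d) - f x ≤ ⟪u, d⟫ + β * n * ‖d‖ ^ 2 := by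
    intro d hd
    have hcoord : ∀ i : Fin n, |(n:ℝ) * d i| ≤ r := by
      intro i
      rw [abs_mul, Nat.abs_cast]
      calc (n:ℝ) * |d i| ≤ (n:ℝ) * ‖d‖ :=
        mul_le_mul_of_nonneg_left (habs d i) hnpos.le
      _ ≤ (n:ℝ) * (r / n) := mul_le_mul_of_nonneg_left hd hnpos.le
      _ = r := by field_simp
    have hdecomp : ∑ i, d i • e i = d := by
      simpa [hedef, EuclideanSpace.basisFun_apply, EuclideanSpace.basisFun_repr]
        using (EuclideanSpace.basisFun (Fin n) ℝ).sum_repr d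
    have hxd : x + d = ∑ i : Fin n, (1/(n:ℝ)) • (x + ((n:ℝ) * d i) • e i) := by
      have hstep : ∑ i : Fin n, (1/(n:ℝ)) • (x + ((n:ℝ) * d i) • e i)
          = ∑ i : Fin n, ((1/(n:ℝ)) • x + d i • e i) := by
        refine Finset.sum_congr rfl fun i _ => ?_
        rw [smul_add, smul_smul]
        congr 2
        field_simp
      rw [hstep, Finset.sum_add_distrib, hdecomp, Finset.sum_const, Finset.card_univ,
        Fintype.card_fin, ← Nat.cast_smul_eq_nsmul ℝ, smul_smul, mul_one_div,
        div_self hnpos.ne', one_smul]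
    have hjensen := hconv.map_sum_le (t := Finset.univ) (w := fun _ : Fin n => 1/(n:ℝ))
      (p := fun i => x + ((n:ℝ) * d i) • e i)
      (fun i _ => by positivity)
      (by rw [Finset.sum_const, Finset.card_univ, Fintype.card_fin, nsmul_eq_mul]
          field_simp)
      (fun i _ => hmemt i _ (hcoord i))
    rw [← hxd] at hjensen
    have hterm : ∀ i : Fin n, (1/(n:ℝ)) * (f x + (u i * ((n:ℝ) * d i) + β * ((n:ℝ) * d i) ^ 2))
        = (1/(n:ℝ)) * f x + (u i * d i + β * (n:ℝ) * d i ^ 2) := by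
      intro i; field_simp
    have hsum : ∑ i : Fin n, (1/(n:ℝ)) • f (x + ((n:ℝ) * d i) • e i)
        ≤ ∑ i : Fin n, ((1/(n:ℝ)) * f x + (u i * d i + β * (n:ℝ) * d i ^ 2)) := by
      refine Finset.sum_le_sum fun i _ => ?_
      rw [smul_eq_mul, ← hterm i]
      refine mul_le_mul_of_nonneg_left ?_ (by positivity)
      have := hU i ((n:ℝ) * d i) (hcoord i)
      linarith
    have hRHS : ∑ i : Fin n, ((1/(n:ℝ)) * f x + (u i * d i + β * (n:ℝ) * d i ^ 2))
        = f x + (⟪u, d⟫ + β * n * ‖d‖ ^ 2) := by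
      rw [Finset.sum_add_distrib, Finset.sum_add_distrib, Finset.sum_const,
        Finset.card_univ, Fintype.card_fin, nsmul_eq_mul, hinner d, hnormsq d,
        Finset.mul_sum]
      have hfx : (n:ℝ) * (1/(n:ℝ) * f x) = f x := by field_simp
      rw [hfx]
    beta_reduce at hjensen
    have := hjensen.trans (hsum.trans_eq hRHS)
    linarith
  -- lower bound in all directions
  have hLall : ∀ d : EuclideanSpace ℝ (Fin n), ‖d‖ ≤ r / n →
      f x + ⟪u, d⟫ - β * n * ‖d‖ ^ 2 ≤ f (x + d) := by
    intro d hd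
    have hdr : ‖d‖ ≤ r := hd.trans (div_le_self hrpos.le hn1)
    have h1 : x + d ∈ Ω := hmem d hdr
    have h2 : x + (-d) ∈ Ω := hmem (-d) (by simpa using hdr)
    have hmid := hconv.2 h1 h2 (by norm_num : (0:ℝ) ≤ 1/2) (by norm_num : (0:ℝ) ≤ 1/2)
      (by norm_num)
    have hpt : (1/2 : ℝ) • (x + d) + (1/2 : ℝ) • (x + (-d)) = x := by module
    rw [hpt] at hmid
    simp only [smul_eq_mul] at hmid
    have hup := hUall (-d) (by simpa using hd)
    rw [inner_neg_right, norm_neg] at hup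
    linarith
  -- conclude differentiability
  have hderiv : HasFDerivAt f ((InnerProductSpace.toDual ℝ (EuclideanSpace ℝ (Fin n)) u :
      EuclideanSpace ℝ (Fin n) →L[ℝ] ℝ)) x := by
    rw [hasFDerivAt_iff_isLittleO_nhds_zero, Asymptotics.isLittleO_iff]
    intro c hc
    have hδ : 0 < min (r / n) (c / (β * n)) := by positivity
    filter_upwards [Metric.ball_mem_nhds (0 : EuclideanSpace ℝ (Fin n)) hδ] with d hd
    rw [mem_ball_zero_iff] at hd
    have hd1 : ‖d‖ ≤ r / n := le_of_lt (lt_of_lt_of_le hd (min_le_left _ _))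
    have hd2 : ‖d‖ ≤ c / (β * n) := le_of_lt (lt_of_lt_of_le hd (min_le_right _ _))
    have h1 := hUall d hd1
    have h2 := hLall d hd1
    have hquad : β * n * ‖d‖ ^ 2 ≤ c * ‖d‖ := by
      have h3 : ‖d‖ * (β * n) ≤ c := (le_div_iff₀ (by positivity)).1 hd2
      nlinarith [norm_nonneg d]
    rw [InnerProductSpace.toDual_apply_apply, Real.norm_eq_abs, abs_le]
    refine ⟨by linarith, by linarith⟩
  exact hderiv.differentiableAt
end

section
/- Let Ω ⊆ ℝⁿ be open convex, f : Ω → ℝ convex and differentiable on Ω, and β > 0. Suppose (β/2)‖x − y‖² ≥ D_f(x, y) ≥ 0 for all x, y ∈ Ω, where D_f(x, y) := f(x) − f(y) − ⟨∇f(y), x − y⟩. Then for every x̄ ∈ Ω, ∇f is Lipschitz on a neighborhood of x̄; consequently f ∈ C^{1,+}(Ω). -/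
open scoped RealInnerProductSpace


private lemma breg_aux1 (β d M : ℝ) (hβ : 0 < β) (hd : 0 ≤ d) (hM : 0 ≤ M)
    (h : M ^ 2 ≤ (β * d) ^ 2) : M ≤ 2 * β * d := by
  have hbd : 0 ≤ β * d := mul_nonneg hβ.le hd
  have := (pow_le_pow_iff_left₀ hM hbd two_ne_zero).mp h
  linarith

private lemma breg_aux2 (β δ d M : ℝ) (hβ : 0 < β) (hδ : 0 < δ) (hd : 0 ≤ d)
    (hd2 : d < 2 * δ) (h : δ * M ≤ β * d ^ 2) : M ≤ 2 * β * d := by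
  nlinarith [mul_le_mul_of_nonneg_left hd2.le (mul_nonneg hβ.le hd), mul_pos hβ hδ]

set_option maxHeartbeats 1000000 in
theorem bregman_bound_implies_locally_lipschitz_gradient
    {n : ℕ} (Ω : Set (EuclideanSpace ℝ (Fin n)))
    (hΩopen : IsOpen Ω) (hΩconv : Convex ℝ Ω)
    (f : EuclideanSpace ℝ (Fin n) → ℝ)
    (hconv : ConvexOn ℝ Ω f)
    (g : EuclideanSpace ℝ (Fin n) → EuclideanSpace ℝ (Fin n))
    (hg : ∀ x ∈ Ω, HasGradientAt f (g x) x)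
    (β : ℝ) (hβ : 0 < β)
    (hBregman : ∀ x ∈ Ω, ∀ y ∈ Ω,
      0 ≤ f x - f y - ⟪g y, x - y⟫ ∧
      f x - f y - ⟪g y, x - y⟫ ≤ β / 2 * ‖x - y‖ ^ 2) :
    ∀ x ∈ Ω, ∃ s ∈ nhds x, ∃ K : NNReal, LipschitzOnWith K g s := by
  intro x₀ hx₀
  obtain ⟨ε, hε, hball⟩ := Metric.isOpen_iff.mp hΩopen x₀ hx₀
  set δ : ℝ := ε / 2 with hδdef
  have hδpos : 0 < δ := by positivity
  refine ⟨Metric.ball x₀ δ, Metric.ball_mem_nhds x₀ hδpos, (show NNReal from ⟨2*β, by positivity⟩), ?_⟩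
  rw [lipschitzOnWith_iff_dist_le_mul]
  intro x hx y hy
  simp only [NNReal.coe_mk]
  have hxΩ : x ∈ Ω := hball (by
    have := Metric.mem_ball.mp hx; simp [Metric.mem_ball]; linarith)
  have hyΩ : y ∈ Ω := hball (by
    have := Metric.mem_ball.mp hy; simp [Metric.mem_ball]; linarith)
  set u := g x - g y with hu
  set M := ‖u‖ with hM
  have hMnn : 0 ≤ M := norm_nonneg _
  set d := dist x y with hd
  have hdnn : 0 ≤ d := dist_nonneg
  have hgoal : dist (g x) (g y) = M := by rw [hM, hu, dist_eq_norm]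
  rw [hgoal]
  have hd2δ : d < 2 * δ := by
    have h1 := Metric.mem_ball.mp hx
    have h2 := Metric.mem_ball.mp hy
    have := dist_triangle x x₀ y
    rw [hd]
    have := dist_comm x₀ y
    linarith [dist_triangle x x₀ y, Metric.mem_ball.mp hx, Metric.mem_ball'.mp hy]
  rcases eq_or_lt_of_le hMnn with hM0 | hMpos
  · rw [← hM0]; nlinarith [mul_nonneg hβ.le hdnn]
  set t : ℝ := min (1/β) (δ/M) with ht
  have htpos : 0 < t := lt_min (by positivity) (by positivity)
  have htM : t * M ≤ δ := by
    have : t ≤ δ / M := min_le_right _ _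
    calc t * M ≤ (δ / M) * M := by nlinarith
    _ = δ := by field_simp
  have hβt : β * t ≤ 1 := by
    have : t ≤ 1 / β := min_le_left _ _
    rw [le_div_iff₀ hβ] at this; linarith
  set z := x - t • u with hz
  have hzΩ : z ∈ Ω := by
    apply hball
    rw [Metric.mem_ball]
    calc dist z x₀ ≤ dist z x + dist x x₀ := dist_triangle _ _ _
    _ < δ + δ := by
        apply add_lt_add_of_le_of_lt _ (Metric.mem_ball.mp hx)
        rw [hz, dist_eq_norm]
        simp only [sub_sub_cancel_left, norm_neg, norm_smul, Real.norm_eq_abs,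
          abs_of_pos htpos]
        exact htM
    _ = ε := by rw [hδdef]; ring
  obtain ⟨-, h2⟩ := hBregman z hzΩ x hxΩ
  obtain ⟨h3, -⟩ := hBregman z hzΩ y hyΩ
  obtain ⟨-, h4⟩ := hBregman x hxΩ y hyΩ
  set A := (⟪g x, u⟫ : ℝ) with hA
  set B := (⟪g y, u⟫ : ℝ) with hB
  set C := (⟪g y, x - y⟫ : ℝ) with hC
  have hAB : A - B = M ^ 2 := by
    rw [hA, hB, ← inner_sub_left, ← hu, hM, real_inner_self_eq_norm_sq]
  have hzx : (⟪g x, z - x⟫ : ℝ) = -(t * A) := by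
    rw [hz]; simp [inner_smul_right, hA]
  have hzy : (⟪g y, z - y⟫ : ℝ) = C - t * B := by
    rw [hz, hC, hB, show x - t • u - y = (x - y) - t • u by abel,
      inner_sub_right, inner_smul_right]
  have hnzx : ‖z - x‖ = t * M := by
    rw [hz]
    simp only [sub_sub_cancel_left, norm_neg, norm_smul, Real.norm_eq_abs,
      abs_of_pos htpos, hM]
  rw [hzx] at h2
  rw [hzy] at h3
  rw [hnzx] at h2
  have hdxy : ‖x - y‖ = d := by rw [hd, dist_eq_norm]
  rw [hdxy] at h4
  have hAB' : t * A - t * B = t * M ^ 2 := by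
    rw [show t * A - t * B = t * (A - B) by ring, hAB]
  have key1 : t * M ^ 2 - β / 2 * (t ^ 2 * M ^ 2) ≤ β / 2 * d ^ 2 := by linarith
  have key2 : t * M ^ 2 ≤ β * d ^ 2 := by
    nlinarith [mul_nonneg (mul_nonneg (sub_nonneg.mpr hβt) htpos.le) (sq_nonneg M)]
  rcases min_cases (1/β) (δ/M) with ⟨heq, -⟩ | ⟨heq, -⟩ <;> rw [ht, heq] at key2
  · -- t = 1/β : M² ≤ β² d²
    have hMsq : M ^ 2 ≤ (β * d) ^ 2 := by
      rw [div_mul_eq_mul_div, div_le_iff₀ hβ] at key2; nlinarith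
    exact breg_aux1 β d M hβ hdnn hMnn hMsq
  · -- t = δ/M : δ M ≤ β d²
    have hom : δ / M * M ^ 2 = δ * M := by field_simp
    rw [hom] at key2
    exact breg_aux2 β δ d M hβ hδpos hdnn hd2δ key2
end

section
/- Let Ω ⊆ ℝⁿ be open convex, f : Ω → ℝ convex, differentiable, and let x, y ∈ Ω and t > 0 with βt < 2 be such that z := x + t(∇f(y) − ∇f(x)) ∈ Ω. If (β/2)‖u − v‖² ≥ D_f(u, v) for all u, v ∈ Ω (where D_f(u,v) = f(u) − f(v) − ⟨∇f(v), u − v⟩), then D_f(x, y) ≥ t(1 − βt/2)‖∇f(x) − ∇f(y)‖². -/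
open scoped RealInnerProductSpace

lemma grad_ineq_aux {n : ℕ} {Ω : Set (EuclideanSpace ℝ (Fin n))} (hΩconv : Convex ℝ Ω)
    {f : EuclideanSpace ℝ (Fin n) → ℝ} (hconv : ConvexOn ℝ Ω f)
    {G y z : EuclideanSpace ℝ (Fin n)} (hgy : HasGradientAt f G y)
    (hy : y ∈ Ω) (hz : z ∈ Ω) : f y + ⟪G, z - y⟫ ≤ f z := by
  set A : ℝ →ᵃ[ℝ] EuclideanSpace ℝ (Fin n) := AffineMap.lineMap y z with hA
  have hAs : ∀ s : ℝ, A s = y + s • (z - y) := by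
    intro s; simp [hA, AffineMap.lineMap_apply]; module
  have hφconv : ConvexOn ℝ (Set.Icc (0:ℝ) 1) (f ∘ A) := by
    refine (hconv.comp_affineMap A).subset ?_ (convex_Icc 0 1)
    intro s hs
    simp only [Set.mem_preimage, hAs]
    have h1 := hΩconv hy hz (by linarith [hs.1, hs.2] : (0:ℝ) ≤ 1 - s) hs.1 (by ring)
    have : y + s • (z - y) = (1 - s) • y + s • z := by module
    rw [this]; exact h1
  have hc : HasDerivAt (fun s : ℝ => y + s • (z - y)) (z - y) 0 := by
    have : HasDerivAt (fun s : ℝ => s • (z - y)) ((1:ℝ) • (z - y)) 0 :=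
      (hasDerivAt_id 0).smul_const (z - y)
    simpa using this.const_add y
  have hgy' : HasFDerivAt f ((InnerProductSpace.toDual ℝ _) G) (y + (0:ℝ) • (z - y)) := by
    simpa using hgy.hasFDerivAt
  have hd : HasDerivAt (f ∘ A) ⟪G, z - y⟫ 0 := by
    have h2 := hgy'.comp_hasDerivAt 0 hc
    have hAe : (f ∘ ⇑A) = f ∘ fun s : ℝ => y + s • (z - y) := by
      funext s; simp [Function.comp, hAs]
    rw [hAe]
    simpa [InnerProductSpace.toDual_apply_apply] using h2
  have hs := hφconv.le_slope_of_hasDerivAt (Set.left_mem_Icc.2 zero_le_one)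
    (Set.right_mem_Icc.2 zero_le_one) one_pos hd
  simp only [slope_def_field, Function.comp, hAs] at hs
  norm_num at hs
  have hi : ⟪G, z - y⟫ = ∑ i, G i * (z i - y i) := by
    simp [PiLp.inner_apply, RCLike.inner_apply, PiLp.sub_apply]
    exact Finset.sum_congr rfl fun i _ => mul_comm _ _
  linarith

theorem bregman_gradient_inequality
    {n : ℕ} (Ω : Set (EuclideanSpace ℝ (Fin n)))
    (hΩopen : IsOpen Ω) (hΩconv : Convex ℝ Ω)
    (f : EuclideanSpace ℝ (Fin n) → ℝ)
    (hconv : ConvexOn ℝ Ω f)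
    (g : EuclideanSpace ℝ (Fin n) → EuclideanSpace ℝ (Fin n))
    (hg : ∀ u ∈ Ω, HasGradientAt f (g u) u)
    (β t : ℝ) (hβ : 0 < β) (ht : 0 < t) (hβt : β * t < 2)
    (x y : EuclideanSpace ℝ (Fin n)) (hx : x ∈ Ω) (hy : y ∈ Ω)
    (hz : x + t • (g y - g x) ∈ Ω)
    (hBregman : ∀ u ∈ Ω, ∀ v ∈ Ω, β / 2 * ‖u - v‖ ^ 2 ≥ f u - f v - ⟪g v, u - v⟫) :
    f x - f y - ⟪g y, x - y⟫ ≥ t * (1 - β * t / 2) * ‖g x - g y‖ ^ 2 := by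
  set z := x + t • (g y - g x) with hzdef
  have hzx : z - x = t • (g y - g x) := by rw [hzdef]; abel
  have h1 : f y + ⟪g y, z - y⟫ ≤ f z := grad_ineq_aux hΩconv hconv (hg y hy) hy hz
  have h2 : β / 2 * ‖z - x‖ ^ 2 ≥ f z - f x - ⟪g x, z - x⟫ := hBregman z hz x hx
  have hnorm : ‖z - x‖ ^ 2 = t ^ 2 * ‖g x - g y‖ ^ 2 := by
    rw [hzx, norm_smul, Real.norm_eq_abs, abs_of_pos ht, norm_sub_rev, mul_pow]
  have hsplit : ⟪g y, x - y⟫ = ⟪g y, z - y⟫ - ⟪g y, z - x⟫ := by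
    rw [← inner_sub_right]; congr 1; abel
  have hiy : ⟪g y, z - x⟫ = t * ⟪g y, g y - g x⟫ := by rw [hzx, real_inner_smul_right]
  have hix : ⟪g x, z - x⟫ = t * ⟪g x, g y - g x⟫ := by rw [hzx, real_inner_smul_right]
  have hdiff : ⟪g y, g y - g x⟫ - ⟪g x, g y - g x⟫ = ‖g x - g y‖ ^ 2 := by
    rw [← inner_sub_left, ← norm_neg (g x - g y), neg_sub, ← real_inner_self_eq_norm_sq]
  nlinarith [hBregman z hz x hx]
end

section
/- Let H be a real Hilbert space, Ω ⊆ H nonempty open convex, f : Ω → ℝ convex and Gâteaux differentiable, and β > 0. If ∇f is β-Lipschitz on Ω, then ∇f is 1/β-cocoercive on Ω: β⟨∇f(x) − ∇f(y), x − y⟩ ≥ ‖∇f(x) − ∇f(y)‖² for all x, y ∈ Ω. -/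
open scoped RealInnerProductSpace

open Filter Set Metric
open scoped Topology

section BHAux

variable {H : Type*} [NormedAddCommGroup H] [InnerProductSpace ℝ H]
  {Ω : Set H} {f : H → ℝ} {g : H → H} {β : ℝ}

/-- Rebased line derivative: derivative of `t ↦ f (u + t • v)` at any `t₀`. -/
lemma bh_lineDeriv
    (hG : ∀ x ∈ Ω, ∀ v : H, HasDerivAt (fun t : ℝ => f (x + t • v)) ⟪g x, v⟫ 0)
    {u v : H} {t₀ : ℝ} (h : u + t₀ • v ∈ Ω) :
    HasDerivAt (fun t : ℝ => f (u + t • v)) ⟪g (u + t₀ • v), v⟫ t₀ := by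
  have h0 := hG _ h v
  have hcomp : (fun t : ℝ => f (u + t • v))
      = (fun s : ℝ => f ((u + t₀ • v) + s • v)) ∘ (fun t : ℝ => t - t₀) := by
    funext t
    simp only [Function.comp_apply]
    congr 1
    rw [add_assoc, ← add_smul]
    ring_nf
  rw [hcomp]
  have hshift : HasDerivAt (fun t : ℝ => t - t₀) 1 t₀ := (hasDerivAt_id t₀).sub_const t₀
  have hmain : HasDerivAt ((fun s : ℝ => f ((u + t₀ • v) + s • v)) ∘ (fun t : ℝ => t - t₀))
      (⟪g (u + t₀ • v), v⟫ * 1) t₀ :=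
    HasDerivAt.comp t₀ (by simpa using h0) hshift
  simpa using hmain

/-- Supporting hyperplane inequality from convexity and the Gâteaux derivative. -/
lemma bh_support (hconv : ConvexOn ℝ Ω f)
    (hG : ∀ x ∈ Ω, ∀ v : H, HasDerivAt (fun t : ℝ => f (x + t • v)) ⟪g x, v⟫ 0)
    {u w : H} (hu : u ∈ Ω) (hw : w ∈ Ω) :
    f w + ⟪g w, u - w⟫ ≤ f u := by
  set φ : ℝ → ℝ := fun t => f (w + t • (u - w)) with hφ
  have hd : HasDerivAt φ ⟪g w, u - w⟫ 0 := hG _ hw _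
  have hslope : Tendsto (slope φ 0) (𝓝[>] 0) (𝓝 ⟪g w, u - w⟫) :=
    (hasDerivAt_iff_tendsto_slope.mp hd).mono_left
      (nhdsWithin_mono _ (fun t ht => by simpa using ne_of_gt ht))
  have hbound : ∀ᶠ t in 𝓝[>] (0:ℝ), slope φ 0 t ≤ f u - f w := by
    filter_upwards [Ioc_mem_nhdsGT_of_mem (show (0:ℝ) ∈ Ico (0:ℝ) 1 by constructor <;> norm_num)]
      with t ht
    have ht0 : 0 < t := ht.1
    have ht1 : t ≤ 1 := ht.2
    have hmem : w + t • (u - w) = (1 - t) • w + t • u := by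
      rw [smul_sub, sub_smul, one_smul]; abel
    have hcv : φ t ≤ (1 - t) * f w + t * f u := by
      rw [hφ]; simp only []
      rw [hmem]
      exact hconv.2 hw hu (by linarith) (le_of_lt ht0) (by ring)
    have : slope φ 0 t = (φ t - φ 0) / t := by
      rw [slope_def_field]; ring_nf
    rw [this]
    rw [div_le_iff₀ ht0]
    have hφ0 : φ 0 = f w := by simp [hφ]
    rw [hφ0]
    nlinarith
  have := le_of_tendsto hslope hbound
  linarith

/-- Descent lemma along a segment contained in `Ω`. -/
lemma bh_descent
    (hG : ∀ x ∈ Ω, ∀ v : H, HasDerivAt (fun t : ℝ => f (x + t • v)) ⟪g x, v⟫ 0)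
    (hβ : 0 < β)
    (hLip : ∀ x ∈ Ω, ∀ y ∈ Ω, ‖g x - g y‖ ≤ β * ‖x - y‖)
    {u e : H} (hseg : ∀ t ∈ Icc (0:ℝ) 1, u + t • e ∈ Ω) :
    f (u + e) ≤ f u + ⟪g u, e⟫ + β / 2 * ‖e‖ ^ 2 := by
  set φ : ℝ → ℝ := fun t => f (u + t • e) with hφdef
  set ψ : ℝ → ℝ := fun t => ⟪g (u + t • e), e⟫ with hψdef
  have huIcc : uIcc (0:ℝ) 1 = Icc (0:ℝ) 1 := uIcc_of_le zero_le_one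
  have hderiv : ∀ t ∈ uIcc (0:ℝ) 1, HasDerivAt φ (ψ t) t := by
    intro t ht
    rw [huIcc] at ht
    exact bh_lineDeriv hG (hseg t ht)
  have hlip : LipschitzOnWith (β * ‖e‖ ^ 2).toNNReal ψ (Icc (0:ℝ) 1) := by
    rw [lipschitzOnWith_iff_dist_le_mul]
    intro s hs t ht
    have h1 : dist (ψ s) (ψ t) = |⟪g (u + s • e) - g (u + t • e), e⟫| := by
      rw [Real.dist_eq, hψdef]
      simp [inner_sub_left]
    rw [h1]
    have h2 : |⟪g (u + s • e) - g (u + t • e), e⟫| ≤ ‖g (u + s • e) - g (u + t • e)‖ * ‖e‖ :=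
      abs_real_inner_le_norm _ _
    have h3 : ‖g (u + s • e) - g (u + t • e)‖ ≤ β * ‖(u + s • e) - (u + t • e)‖ :=
      hLip _ (hseg s hs) _ (hseg t ht)
    have h4 : ‖(u + s • e) - (u + t • e)‖ = |s - t| * ‖e‖ := by
      rw [show (u + s • e) - (u + t • e) = (s - t) • e by rw [sub_smul]; abel]
      rw [norm_smul, Real.norm_eq_abs]
    have hcoe : ((β * ‖e‖ ^ 2).toNNReal : ℝ) = β * ‖e‖ ^ 2 :=
      Real.coe_toNNReal _ (by positivity)
    rw [hcoe, Real.dist_eq]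
    calc |⟪g (u + s • e) - g (u + t • e), e⟫|
        ≤ ‖g (u + s • e) - g (u + t • e)‖ * ‖e‖ := h2
      _ ≤ (β * (|s - t| * ‖e‖)) * ‖e‖ := by
          apply mul_le_mul_of_nonneg_right _ (norm_nonneg _)
          rw [← h4]; exact h3
      _ = β * ‖e‖ ^ 2 * |s - t| := by ring
  have hcont : ContinuousOn ψ (uIcc (0:ℝ) 1) := by
    rw [huIcc]; exact hlip.continuousOn
  have hint : IntervalIntegrable ψ MeasureTheory.volume 0 1 := hcont.intervalIntegrable
  have hftc : ∫ t in (0:ℝ)..1, ψ t = φ 1 - φ 0 :=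
    intervalIntegral.integral_eq_sub_of_hasDerivAt hderiv hint
  have hmono : ∀ t ∈ Icc (0:ℝ) 1, ψ t ≤ ψ 0 + β * ‖e‖ ^ 2 * t := by
    intro t ht
    have h1 : ψ t - ψ 0 = ⟪g (u + t • e) - g (u + (0:ℝ) • e), e⟫ := by
      rw [hψdef]; simp [inner_sub_left]
    have h2 : ⟪g (u + t • e) - g (u + (0:ℝ) • e), e⟫
        ≤ ‖g (u + t • e) - g (u + (0:ℝ) • e)‖ * ‖e‖ := real_inner_le_norm _ _
    have h3 : ‖g (u + t • e) - g (u + (0:ℝ) • e)‖ ≤ β * ‖(u + t • e) - (u + (0:ℝ) • e)‖ :=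
      hLip _ (hseg t ht) _ (hseg 0 (by constructor <;> norm_num))
    have h4 : ‖(u + t • e) - (u + (0:ℝ) • e)‖ = t * ‖e‖ := by
      rw [show (u + t • e) - (u + (0:ℝ) • e) = t • e by rw [zero_smul]; abel]
      rw [norm_smul, Real.norm_eq_abs, abs_of_nonneg ht.1]
    have h5 : ‖g (u + t • e) - g (u + (0:ℝ) • e)‖ * ‖e‖ ≤ β * (t * ‖e‖) * ‖e‖ := by
      apply mul_le_mul_of_nonneg_right _ (norm_nonneg _)
      rw [← h4]; exact h3
    have h6 : β * (t * ‖e‖) * ‖e‖ = β * ‖e‖ ^ 2 * t := by ring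
    linarith
  have hintR : IntervalIntegrable (fun t => ψ 0 + β * ‖e‖ ^ 2 * t) MeasureTheory.volume 0 1 := by
    apply Continuous.intervalIntegrable; continuity
  have hcomp : ∫ t in (0:ℝ)..1, ψ t ≤ ∫ t in (0:ℝ)..1, (ψ 0 + β * ‖e‖ ^ 2 * t) := by
    apply intervalIntegral.integral_mono_on zero_le_one hint hintR hmono
  have hval : ∫ t in (0:ℝ)..1, (ψ 0 + β * ‖e‖ ^ 2 * t) = ψ 0 + β * ‖e‖ ^ 2 / 2 := by
    rw [intervalIntegral.integral_add (by apply Continuous.intervalIntegrable; continuity)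
      (by apply Continuous.intervalIntegrable; continuity)]
    rw [intervalIntegral.integral_const, intervalIntegral.integral_const_mul, integral_id]
    norm_num [smul_eq_mul]
    ring
  have hφ1 : φ 1 = f (u + e) := by rw [hφdef]; simp
  have hφ0 : φ 0 = f u := by rw [hφdef]; simp
  have hψ0 : ψ 0 = ⟪g u, e⟫ := by rw [hψdef]; simp
  rw [hftc] at hcomp
  rw [hval, hφ1, hφ0, hψ0] at hcomp
  linarith

/-- Local Bregman lower bound when there is enough room around `u`. -/
lemma bh_bregman (hΩconv : Convex ℝ Ω) (hconv : ConvexOn ℝ Ω f)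
    (hG : ∀ x ∈ Ω, ∀ v : H, HasDerivAt (fun t : ℝ => f (x + t • v)) ⟪g x, v⟫ 0)
    (hβ : 0 < β)
    (hLip : ∀ x ∈ Ω, ∀ y ∈ Ω, ‖g x - g y‖ ≤ β * ‖x - y‖)
    {u w : H} (hu : u ∈ Ω) (hw : w ∈ Ω)
    (hball : closedBall u ‖u - w‖ ⊆ Ω) :
    f w + ⟪g w, u - w⟫ + ‖g u - g w‖ ^ 2 / (2 * β) ≤ f u := by
  set p : H := g u - g w with hp
  set e : H := -(β⁻¹ • p) with he
  have hne : ‖e‖ ≤ ‖u - w‖ := by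
    rw [he, norm_neg, norm_smul, Real.norm_eq_abs, abs_of_pos (inv_pos.mpr hβ)]
    rw [inv_mul_le_iff₀ hβ]
    exact hLip _ hu _ hw
  have hseg : ∀ t ∈ Icc (0:ℝ) 1, u + t • e ∈ Ω := by
    intro t ht
    apply hball
    rw [mem_closedBall, dist_eq_norm]
    rw [show u + t • e - u = t • e by abel]
    rw [norm_smul, Real.norm_eq_abs, abs_of_nonneg ht.1]
    calc t * ‖e‖ ≤ 1 * ‖e‖ := mul_le_mul_of_nonneg_right ht.2 (norm_nonneg _)
      _ = ‖e‖ := one_mul _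
      _ ≤ ‖u - w‖ := hne
  have hdesc := bh_descent hG hβ hLip hseg
  have hue : u + e ∈ Ω := by
    have := hseg 1 (by constructor <;> norm_num)
    simpa using this
  have hsupp := bh_support hconv hG hue hw
  -- combine
  have h1 : ⟪g w, u + e - w⟫ = ⟪g w, u - w⟫ + ⟪g w, e⟫ := by
    rw [show u + e - w = (u - w) + e by abel, inner_add_right]
  have h2 : ⟪g u, e⟫ - ⟪g w, e⟫ = ⟪p, e⟫ := by rw [hp, inner_sub_left]
  have h3 : ⟪p, e⟫ = -(β⁻¹ * ‖p‖ ^ 2) := by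
    rw [he, inner_neg_right, real_inner_smul_right, real_inner_self_eq_norm_sq]
  have h4 : ‖e‖ ^ 2 = β⁻¹ ^ 2 * ‖p‖ ^ 2 := by
    rw [he, norm_neg, norm_smul, Real.norm_eq_abs, abs_of_pos (inv_pos.mpr hβ)]
    ring
  have hβ' : β ≠ 0 := ne_of_gt hβ
  rw [h1] at hsupp
  rw [h4] at hdesc
  have hsimp : -(β⁻¹ * ‖p‖ ^ 2) + β / 2 * (β⁻¹ ^ 2 * ‖p‖ ^ 2) = -(‖p‖ ^ 2 / (2 * β)) := by
    field_simp
    ring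
  linarith [hsupp, hdesc, h2, h3, hsimp]

/-- Local cocoercivity for nearby pairs. -/
lemma bh_local (hΩconv : Convex ℝ Ω) (hconv : ConvexOn ℝ Ω f)
    (hG : ∀ x ∈ Ω, ∀ v : H, HasDerivAt (fun t : ℝ => f (x + t • v)) ⟪g x, v⟫ 0)
    (hβ : 0 < β)
    (hLip : ∀ x ∈ Ω, ∀ y ∈ Ω, ‖g x - g y‖ ≤ β * ‖x - y‖)
    {u w : H} (hu : u ∈ Ω) (hw : w ∈ Ω)
    (hballu : closedBall u ‖u - w‖ ⊆ Ω) (hballw : closedBall w ‖u - w‖ ⊆ Ω) :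
    ‖g u - g w‖ ^ 2 ≤ β * ⟪g u - g w, u - w⟫ := by
  have h1 := bh_bregman hΩconv hconv hG hβ hLip hu hw hballu
  have h2 := bh_bregman hΩconv hconv hG hβ hLip hw hu (by rwa [norm_sub_rev])
  have hsym : ‖g w - g u‖ = ‖g u - g w‖ := norm_sub_rev _ _
  rw [hsym] at h2
  have h3 : ⟪g u, w - u⟫ = -⟪g u, u - w⟫ := by
    rw [show w - u = -(u - w) by abel, inner_neg_right]
  rw [h3] at h2
  have h4 : ⟪g u - g w, u - w⟫ = ⟪g u, u - w⟫ - ⟪g w, u - w⟫ := inner_sub_left _ _ _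
  have h5 : ⟪g u, u - w⟫ - ⟪g w, u - w⟫ ≥ ‖g u - g w‖ ^ 2 / β := by
    have := add_le_add h1 h2
    have hb : ‖g u - g w‖ ^ 2 / (2 * β) + ‖g u - g w‖ ^ 2 / (2 * β) = ‖g u - g w‖ ^ 2 / β := by
      field_simp; ring
    nlinarith
  rw [h4]
  rw [ge_iff_le, div_le_iff₀ hβ] at h5
  nlinarith

end BHAux

theorem baillon_haddad_gateaux_hilbert
    {H : Type*} [NormedAddCommGroup H] [InnerProductSpace ℝ H] [CompleteSpace H]
    (Ω : Set H) (hΩne : Ω.Nonempty) (hΩopen : IsOpen Ω) (hΩconv : Convex ℝ Ω)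
    (f : H → ℝ) (hconv : ConvexOn ℝ Ω f)
    (g : H → H)
    (hGateaux : ∀ x ∈ Ω, ∀ v : H,
      HasDerivAt (fun t : ℝ => f (x + t • v)) ⟪g x, v⟫ 0)
    (β : ℝ) (hβ : 0 < β)
    (hLip : ∀ x ∈ Ω, ∀ y ∈ Ω, ‖g x - g y‖ ≤ β * ‖x - y‖) :
    ∀ x ∈ Ω, ∀ y ∈ Ω, β * ⟪g x - g y, x - y⟫ ≥ ‖g x - g y‖ ^ 2 := by
  intro x hx y hy
  -- compact segment inside the open set
  have hKcomp : IsCompact (segment ℝ x y) := by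
    rw [segment_eq_image']
    exact (isCompact_Icc.image (by continuity))
  have hKΩ : segment ℝ x y ⊆ Ω := hΩconv.segment_subset hx hy
  obtain ⟨δ, hδpos, hδsub⟩ := hKcomp.exists_cthickening_subset_open hΩopen hKΩ
  -- choose n
  obtain ⟨m, hm⟩ := exists_nat_ge (‖y - x‖ / δ)
  set n : ℕ := max m 1 with hn
  have hn1 : 1 ≤ n := le_max_right _ _
  have hNpos : (0:ℝ) < (n:ℝ) := by exact_mod_cast Nat.lt_of_lt_of_le Nat.zero_lt_one hn1
  have hNne : (n:ℝ) ≠ 0 := ne_of_gt hNpos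
  set e : H := ((n:ℝ))⁻¹ • (y - x) with he
  have hne : ‖e‖ ≤ δ := by
    rw [he, norm_smul, Real.norm_eq_abs, abs_of_pos (inv_pos.mpr hNpos)]
    rw [inv_mul_le_iff₀ hNpos]
    have hmn : (m:ℝ) ≤ (n:ℝ) := by exact_mod_cast le_max_left m 1
    rw [div_le_iff₀ hδpos] at hm
    calc ‖y - x‖ ≤ (m:ℝ) * δ := hm
      _ ≤ (n:ℝ) * δ := by nlinarith
  set z : ℕ → H := fun i => x + (i:ℝ) • e with hz
  have hzmem : ∀ i : ℕ, i ≤ n → z i ∈ segment ℝ x y := by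
    intro i hi
    rw [segment_eq_image']
    refine ⟨(i:ℝ) * (n:ℝ)⁻¹, ?_, ?_⟩
    · constructor
      · positivity
      · rw [mul_inv_le_iff₀ hNpos, one_mul]
        exact_mod_cast hi
    · rw [hz]
      simp only []
      rw [he, smul_smul]
  have hzΩ : ∀ i : ℕ, i ≤ n → z i ∈ Ω := fun i hi => hKΩ (hzmem i hi)
  have hzball : ∀ i : ℕ, i ≤ n → closedBall (z i) δ ⊆ Ω := by
    intro i hi
    exact (closedBall_subset_cthickening (hzmem i hi) δ).trans hδsub
  have hstep : ∀ i : ℕ, i < n →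
      ‖g (z (i+1)) - g (z i)‖ ^ 2 ≤ β * ⟪g (z (i+1)) - g (z i), e⟫ := by
    intro i hi
    have hdiff : z (i+1) - z i = e := by
      rw [hz]
      simp only []
      rw [show ((i:ℕ)+1 : ℕ) = i + 1 from rfl]
      push_cast
      rw [add_smul, one_smul]
      abel
    have h1 : i + 1 ≤ n := hi
    have h2 : i ≤ n := le_of_lt hi
    have hball1 : closedBall (z (i+1)) ‖z (i+1) - z i‖ ⊆ Ω := by
      refine (closedBall_subset_closedBall ?_).trans (hzball (i+1) h1)
      rw [hdiff]; exact hne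
    have hball2 : closedBall (z i) ‖z (i+1) - z i‖ ⊆ Ω := by
      refine (closedBall_subset_closedBall ?_).trans (hzball i h2)
      rw [hdiff]; exact hne
    have := bh_local hΩconv hconv hGateaux hβ hLip (hzΩ (i+1) h1) (hzΩ i h2) hball1 hball2
    rwa [hdiff] at this
  -- telescoping sum
  set D : ℕ → H := fun i => g (z (i+1)) - g (z i) with hD
  have htel : ∑ i ∈ Finset.range n, D i = g y - g x := by
    rw [hD]
    rw [Finset.sum_range_sub (fun i => g (z i)) n]
    congr 2
    · rw [hz]; simp only []
      rw [he, smul_smul, mul_inv_cancel₀ hNne, one_smul]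
      abel
    · rw [hz]; simp
  -- final chain
  have hsum1 : ‖g y - g x‖ ≤ ∑ i ∈ Finset.range n, ‖D i‖ := by
    rw [← htel]; exact norm_sum_le _ _
  have hsum2 : (∑ i ∈ Finset.range n, ‖D i‖) ^ 2 ≤ (n:ℝ) * ∑ i ∈ Finset.range n, ‖D i‖ ^ 2 := by
    have := sq_sum_le_card_mul_sum_sq (s := Finset.range n) (f := fun i => ‖D i‖)
    simpa using this
  have hsum3 : ∑ i ∈ Finset.range n, ‖D i‖ ^ 2 ≤ β * ∑ i ∈ Finset.range n, ⟪D i, e⟫ := by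
    rw [Finset.mul_sum]
    apply Finset.sum_le_sum
    intro i hi
    exact hstep i (Finset.mem_range.mp hi)
  have hinner : ⟪g y - g x, y - x⟫ = (n:ℝ) * ∑ i ∈ Finset.range n, ⟪D i, e⟫ := by
    rw [← htel, ← sum_inner]
    have hyx : y - x = (n:ℝ) • e := by
      rw [he, smul_smul, mul_inv_cancel₀ hNne, one_smul]
    rw [hyx, real_inner_smul_right]
  have hflip1 : ⟪g x - g y, x - y⟫ = ⟪g y - g x, y - x⟫ := by
    rw [show g x - g y = -(g y - g x) by abel, show x - y = -(y - x) by abel, inner_neg_neg]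
  have hflip2 : ‖g x - g y‖ = ‖g y - g x‖ := norm_sub_rev _ _
  rw [ge_iff_le, hflip1, hflip2, hinner]
  have hS : (0:ℝ) ≤ ‖g y - g x‖ := norm_nonneg _
  have hsumnn : (0:ℝ) ≤ ∑ i ∈ Finset.range n, ‖D i‖ := Finset.sum_nonneg (fun i _ => norm_nonneg _)
  nlinarith [hsum1, hsum2, hsum3, hNpos]
end

section
/- Let H be a real Hilbert space, Ω ⊆ H nonempty open convex, and f : Ω → ℝ convex. Then f is Fréchet differentiable on Ω with locally Lipschitz gradient (f ∈ C^{1,+}(Ω)) if and only if f is Gâteaux differentiable on Ω and ∇f is locally cocoercive, i.e., for every x ∈ Ω there exist a neighborhood U ⊆ Ω of x and β > 0 such that β⟨∇f(u) − ∇f(v), u − v⟩ ≥ ‖∇f(u) − ∇f(v)‖² for all u, v ∈ U. -/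
open scoped RealInnerProductSpace
open Set

section AuxC1plus
variable {H : Type*} [NormedAddCommGroup H] [InnerProductSpace ℝ H]

variable {H : Type*} [NormedAddCommGroup H] [InnerProductSpace ℝ H]

/-- Shift a Gateaux-type derivative along a line. -/
lemma line_deriv_shift' {f : H → ℝ} {g : H → H} {x h : H} (t₀ : ℝ)
    (hg : HasDerivAt (fun s : ℝ => f ((x + t₀ • h) + s • h)) ⟪g (x + t₀ • h), h⟫ 0) :
    HasDerivAt (fun t : ℝ => f (x + t • h)) ⟪g (x + t₀ • h), h⟫ t₀ := by
  have hφ : HasDerivAt (fun t : ℝ => t - t₀) 1 t₀ := (hasDerivAt_id t₀).sub_const t₀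
  have := HasDerivAt.scomp (𝕜 := ℝ) t₀ (by simpa using hg) hφ
  simp only [Function.comp, smul_eq_mul, mul_one, one_smul, one_mul] at this
  have key : (fun t : ℝ => f (x + t • h)) = ((fun s => f (x + t₀ • h + s • h)) ∘ fun t => t - t₀) := by
    funext t
    show f (x + t • h) = f (x + t₀ • h + (t - t₀) • h)
    congr 1
    rw [sub_smul]
    abel
  rw [key]
  exact this

/-- 1-D segment estimate. -/
lemma segment_est' {f : H → ℝ} {g : H → H} {x h : H} {C : ℝ}
    (hderiv : ∀ t ∈ Icc (0:ℝ) 1, HasDerivAt (fun t : ℝ => f (x + t • h)) ⟪g (x + t • h), h⟫ t)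
    (hbound : ∀ t ∈ Icc (0:ℝ) 1, ‖g (x + t • h) - g x‖ ≤ C) :
    |f (x + h) - f x - ⟪g x, h⟫| ≤ C * ‖h‖ := by
  set F : ℝ → ℝ := fun t => f (x + t • h) - t * ⟪g x, h⟫ with hF
  have hF' : ∀ t ∈ Icc (0:ℝ) 1, HasDerivWithinAt F (⟪g (x + t • h) - g x, h⟫) (Icc 0 1) t := by
    intro t ht
    have := (hderiv t ht).sub ((hasDerivAt_id t).mul_const ⟪g x, h⟫)
    rw [inner_sub_left]
    rw [one_mul] at this
    exact this.hasDerivWithinAt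
  have hb : ∀ t ∈ Icc (0:ℝ) 1, ‖(⟪g (x + t • h) - g x, h⟫ : ℝ)‖ ≤ C * ‖h‖ := by
    intro t ht
    calc ‖(⟪g (x + t • h) - g x, h⟫ : ℝ)‖ ≤ ‖g (x + t • h) - g x‖ * ‖h‖ := by
          rw [Real.norm_eq_abs]; exact abs_real_inner_le_norm _ _
      _ ≤ C * ‖h‖ := mul_le_mul_of_nonneg_right (hbound t ht) (norm_nonneg h)
  have key := (convex_Icc (0:ℝ) 1).norm_image_sub_le_of_norm_hasDerivWithin_le
    hF' hb (by norm_num : (0:ℝ) ∈ Icc (0:ℝ) 1) (by norm_num : (1:ℝ) ∈ Icc (0:ℝ) 1)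
  have h0 : F 0 = f x := by simp [hF]
  have h1 : F 1 = f (x + h) - ⟪g x, h⟫ := by simp [hF]
  rw [h0, h1] at key
  simpa [Real.norm_eq_abs, sub_sub, add_comm] using key

/-- Gradient inequality for convex functions, from one-sided derivative along a segment. -/
lemma convex_grad_ineq' {Ω : Set H} {f : H → ℝ} (hconv : ConvexOn ℝ Ω f) {u z : H} {D : ℝ}
    (hu : u ∈ Ω) (hz : z ∈ Ω)
    (hD : HasDerivAt (fun t : ℝ => f (u + t • (z - u))) D 0) :
    f u + D ≤ f z := by
  have hq0 : u + (0:ℝ) • (z - u) = u := by simp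
  have slope_le : ∀ t ∈ Ioc (0:ℝ) 1,
      slope (fun t : ℝ => f (u + t • (z - u))) 0 t ≤ f z - f u := by
    intro t ht
    obtain ⟨ht0, ht1⟩ := ht
    have hpt : u + t • (z - u) = (1 - t) • u + t • z := by
      rw [smul_sub, sub_smul]; module
    have hcv := hconv.2 hu hz (by linarith : (0:ℝ) ≤ 1 - t) ht0.le (by ring)
    rw [← hpt] at hcv
    simp only [slope_def_field, smul_eq_mul, hq0, sub_zero] at *
    rw [div_le_iff₀ ht0]
    nlinarith [hcv]
  rw [hasDerivAt_iff_tendsto_slope] at hD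
  have hD' : Filter.Tendsto (slope (fun t : ℝ => f (u + t • (z - u))) 0)
      (nhdsWithin 0 (Ioi 0)) (nhds D) :=
    hD.mono_left (nhdsWithin_mono _ (fun t ht => ne_of_gt ht))
  have hev : ∀ᶠ t in nhdsWithin (0:ℝ) (Ioi 0),
      slope (fun t : ℝ => f (u + t • (z - u))) 0 t ≤ f z - f u := by
    filter_upwards [Ioc_mem_nhdsGT_of_mem ⟨le_refl (0:ℝ), one_pos⟩] with t ht
    exact slope_le t ht
  have := le_of_tendsto hD' hev
  linarith

/-- Quadratic bound for functions with Lipschitz Gateaux derivative on a convex set. -/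
lemma quad_bound' {f : H → ℝ} {g : H → H} {s : Set H} (hs : Convex ℝ s) {L : ℝ} (hL : 0 ≤ L)
    (hgat : ∀ y ∈ s, ∀ v : H, HasDerivAt (fun t : ℝ => f (y + t • v)) ⟪g y, v⟫ 0)
    (hlip : ∀ a ∈ s, ∀ b ∈ s, ‖g a - g b‖ ≤ L * ‖a - b‖)
    {v w : H} (hv : v ∈ s) (hw : w ∈ s) :
    |f w - f v - ⟪g v, w - v⟫| ≤ L * ‖w - v‖ ^ 2 := by
  set h : H := w - v with hh
  have hseg : ∀ t ∈ Icc (0:ℝ) 1, v + t • h ∈ s := by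
    intro t ht
    have : v + t • h = (1 - t) • v + t • w := by rw [hh, smul_sub, sub_smul]; module
    rw [this]
    exact hs hv hw (by linarith [ht.2]) ht.1 (by ring)
  have hderiv : ∀ t ∈ Icc (0:ℝ) 1,
      HasDerivAt (fun t : ℝ => f (v + t • h)) ⟪g (v + t • h), h⟫ t := by
    intro t ht
    exact line_deriv_shift' t (hgat (v + t • h) (hseg t ht) h)
  have hbound : ∀ t ∈ Icc (0:ℝ) 1, ‖g (v + t • h) - g v‖ ≤ L * ‖h‖ := by
    intro t ht
    calc ‖g (v + t • h) - g v‖ ≤ L * ‖(v + t • h) - v‖ := hlip _ (hseg t ht) v hv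
      _ = L * (t * ‖h‖) := by
          rw [add_sub_cancel_left, norm_smul, Real.norm_eq_abs, abs_of_nonneg ht.1]
      _ ≤ L * (1 * ‖h‖) := by
          apply mul_le_mul_of_nonneg_left _ hL
          exact mul_le_mul_of_nonneg_right ht.2 (norm_nonneg _)
      _ = L * ‖h‖ := by ring
  have key := segment_est' hderiv hbound
  have hvw : v + h = w := by rw [hh]; abel
  rw [hvw] at key
  calc |f w - f v - ⟪g v, h⟫| ≤ L * ‖h‖ * ‖h‖ := key
    _ = L * ‖h‖ ^ 2 := by ring

lemma coco_lip' {g : H → H} {U : Set H} {β : ℝ} (hβ : 0 < β)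
    (hco : ∀ u ∈ U, ∀ v ∈ U, β * ⟪g u - g v, u - v⟫ ≥ ‖g u - g v‖ ^ 2) :
    ∀ u ∈ U, ∀ v ∈ U, ‖g u - g v‖ ≤ β * ‖u - v‖ := by
  intro u hu v hv
  have h1 := hco u hu v hv
  rcases eq_or_lt_of_le (norm_nonneg (g u - g v)) with hz | hpos
  · rw [← hz]; positivity
  · have h2 : ⟪g u - g v, u - v⟫ ≤ ‖g u - g v‖ * ‖u - v‖ := real_inner_le_norm _ _
    have h3 : ‖g u - g v‖ ^ 2 ≤ β * (‖g u - g v‖ * ‖u - v‖) := by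
      refine le_trans h1 ?_
      exact mul_le_mul_of_nonneg_left h2 hβ.le
    nlinarith

end AuxC1plus

theorem C1plus_iff_locally_cocoercive
    {H : Type*} [NormedAddCommGroup H] [InnerProductSpace ℝ H] [CompleteSpace H]
    (Ω : Set H) (hΩne : Ω.Nonempty) (hΩopen : IsOpen Ω) (hΩconv : Convex ℝ Ω)
    (f : H → ℝ) (hconv : ConvexOn ℝ Ω f) :
    (∃ g : H → H, (∀ x ∈ Ω, HasGradientAt f (g x) x) ∧
      ∀ x ∈ Ω, ∃ s ∈ nhds x, ∃ K : NNReal, LipschitzOnWith K g s) ↔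
    (∃ g : H → H,
      (∀ x ∈ Ω, ∀ v : H, HasDerivAt (fun t : ℝ => f (x + t • v)) ⟪g x, v⟫ 0) ∧
      ∀ x ∈ Ω, ∃ U ∈ nhds x, U ⊆ Ω ∧ ∃ β : ℝ, 0 < β ∧
        ∀ u ∈ U, ∀ v ∈ U, β * ⟪g u - g v, u - v⟫ ≥ ‖g u - g v‖ ^ 2) := by
  constructor
  · rintro ⟨g, hgrad, hlip⟩
    have hgat : ∀ x ∈ Ω, ∀ v : H, HasDerivAt (fun t : ℝ => f (x + t • v)) ⟪g x, v⟫ 0 := by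
      intro x hx v
      have hf := (hgrad x hx).hasFDerivAt
      have hc : HasDerivAt (fun t : ℝ => x + t • v) v 0 := by
        simpa using ((hasDerivAt_id (0:ℝ)).smul_const v).const_add x
      have h0 : x + (0:ℝ) • v = x := by simp
      rw [← h0] at hf
      have := hf.comp_hasDerivAt 0 hc
      simp only [InnerProductSpace.toDual_apply_apply, h0] at this
      exact this
    refine ⟨g, hgat, ?_⟩
    intro x hx
    obtain ⟨s, hs, K, hK⟩ := hlip x hx
    obtain ⟨r, hr, hball⟩ := Metric.mem_nhds_iff.mp (Filter.inter_mem hs (hΩopen.mem_nhds hx))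
    set L : ℝ := max (K:ℝ) 1 with hLdef
    have hL1 : (1:ℝ) ≤ L := le_max_right _ _
    have hL0 : (0:ℝ) < L := lt_of_lt_of_le one_pos hL1
    have hKL : (K:ℝ) ≤ L := le_max_left _ _
    have hballΩ : Metric.ball x r ⊆ Ω := fun y hy => (hball hy).2
    have hlipR : ∀ a ∈ Metric.ball x r, ∀ b ∈ Metric.ball x r, ‖g a - g b‖ ≤ L * ‖a - b‖ := by
      intro a ha b hb
      have h1 := hK.dist_le_mul a (hball ha).1 b (hball hb).1
      rw [dist_eq_norm, dist_eq_norm] at h1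
      exact h1.trans (mul_le_mul_of_nonneg_right hKL (norm_nonneg _))
    have hmem : ∀ y ∈ Metric.ball x (r/2), y ∈ Metric.ball x r :=
      fun y hy => Metric.ball_subset_ball (by linarith) hy
    refine ⟨Metric.ball x (r/2), Metric.ball_mem_nhds x (by linarith),
      fun y hy => hballΩ (hmem y hy), 2*L, by linarith, ?_⟩
    have key : ∀ u ∈ Metric.ball x (r/2), ∀ v ∈ Metric.ball x (r/2),
        f u + ⟪g u, v - u⟫ + 1/(4*L) * ‖g v - g u‖ ^ 2 ≤ f v := by
      intro u hu v hv
      set c : ℝ := 1/(2*L) with hc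
      have hc0 : 0 < c := by positivity
      set d : H := g v - g u with hd
      set w : H := v - c • d with hwdef
      have hdb : ‖d‖ ≤ L * ‖v - u‖ := hlipR v (hmem v hv) u (hmem u hu)
      have hvu : ‖v - u‖ < r := by
        have h1 : ‖v - u‖ ≤ ‖v - x‖ + ‖x - u‖ := norm_sub_le_norm_sub_add_norm_sub v x u
        have h2 : ‖v - x‖ < r/2 := mem_ball_iff_norm.mp hv
        have h3 : ‖x - u‖ < r/2 := by
          rw [norm_sub_rev]; exact mem_ball_iff_norm.mp hu
        linarith
      have hwball : w ∈ Metric.ball x r := by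
        rw [mem_ball_iff_norm]
        have h0 : w - x = (v - x) - c • d := by rw [hwdef]; abel
        have h1 : ‖w - x‖ ≤ ‖v - x‖ + c * ‖d‖ := by
          rw [h0]
          refine (norm_sub_le _ _).trans ?_
          rw [norm_smul, Real.norm_eq_abs, abs_of_pos hc0]
        have h2 : c * ‖d‖ ≤ c * (L * ‖v - u‖) := mul_le_mul_of_nonneg_left hdb hc0.le
        have h3 : c * (L * ‖v - u‖) = ‖v - u‖ / 2 := by
          rw [hc]; field_simp
        have h4 : ‖v - x‖ < r/2 := mem_ball_iff_norm.mp hv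
        linarith
      have hdesc : f w ≤ f v + ⟪g v, w - v⟫ + L * ‖w - v‖ ^ 2 := by
        have hq := quad_bound' (convex_ball x r) hL0.le
          (fun y hy v' => hgat y (hballΩ hy) v') hlipR (hmem v hv) hwball
        have := (abs_le.mp hq).2
        linarith
      have hgi : f u + ⟪g u, w - u⟫ ≤ f w :=
        convex_grad_ineq' hconv (hballΩ (hmem u hu)) (hballΩ hwball)
          (hgat u (hballΩ (hmem u hu)) (w - u))
      have e1 : ⟪g u, w - u⟫ = ⟪g u, v - u⟫ - c * ⟪g u, d⟫ := by
        have : w - u = (v - u) - c • d := by rw [hwdef]; abel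
        rw [this, inner_sub_right, real_inner_smul_right]
      have e2 : ⟪g v, w - v⟫ = -(c * ⟪g v, d⟫) := by
        have : w - v = -(c • d) := by rw [hwdef]; abel
        rw [this, inner_neg_right, real_inner_smul_right]
      have e3 : ‖w - v‖ ^ 2 = c^2 * ‖d‖^2 := by
        have : w - v = -(c • d) := by rw [hwdef]; abel
        rw [this, norm_neg, norm_smul, Real.norm_eq_abs, abs_of_pos hc0, mul_pow]
      have e4 : ⟪g v, d⟫ - ⟪g u, d⟫ = ‖d‖^2 := by
        rw [← inner_sub_left, ← hd, real_inner_self_eq_norm_sq]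
      have hcval : c - L * c^2 = 1/(4*L) := by
        rw [hc]; field_simp; ring
      have comb := hgi.trans hdesc
      rw [e1, e2, e3] at comb
      have eQP : c * ⟪g v, d⟫ - c * ⟪g u, d⟫ = c * ‖d‖^2 := by rw [← mul_sub, e4]
      have e7 : c * ‖d‖^2 - L * (c^2 * ‖d‖^2) = 1/(4*L) * ‖d‖^2 := by
        have h8 : c * ‖d‖^2 - L * (c^2 * ‖d‖^2) = (c - L * c^2) * ‖d‖^2 := by ring
        rw [h8, hcval]
      linarith
    intro u hu v hv
    have k1 := key u hu v hv
    have k2 := key v hv u hu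
    set N : ℝ := ‖g u - g v‖ ^ 2 with hN
    have e6 : ‖g v - g u‖ ^ 2 = N := by rw [hN, norm_sub_rev]
    have e5 : ⟪g u, v - u⟫ + ⟪g v, u - v⟫ = -⟪g u - g v, u - v⟫ := by
      have h1 : v - u = -(u - v) := by abel
      rw [h1, inner_neg_right, inner_sub_left]; ring
    have hsum : -⟪g u - g v, u - v⟫ + 1/(2*L) * N ≤ 0 := by
      have hL0' : L ≠ 0 := hL0.ne'
      have hhl : 1/(4*L) + 1/(4*L) = 1/(2*L) := by field_simp; ring
      have hhl2 : 1/(4*L) * N + 1/(4*L) * N = 1/(2*L) * N := by rw [← add_mul, hhl]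
      rw [e6] at k1
      rw [← e5]; linarith [k1, k2, hhl2]
    have hNpos : (0:ℝ) ≤ N := by positivity
    have h7 : 1/(2*L) * N ≤ ⟪g u - g v, u - v⟫ := by linarith
    calc N = (2*L) * (1/(2*L) * N) := by field_simp
      _ ≤ (2*L) * ⟪g u - g v, u - v⟫ := by
          exact mul_le_mul_of_nonneg_left h7 (by linarith)
  · rintro ⟨g, hgat, hcoco⟩
    refine ⟨g, ?_, ?_⟩
    · intro x hx
      obtain ⟨U, hU, hUΩ, β, hβ, hco⟩ := hcoco x hx
      have hlip := coco_lip' hβ hco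
      obtain ⟨r, hr, hball⟩ := Metric.mem_nhds_iff.mp hU
      rw [hasGradientAt_iff_hasFDerivAt, hasFDerivAt_iff_isLittleO_nhds_zero,
        Asymptotics.isLittleO_iff]
      intro ε hε
      have hδ : (0:ℝ) < min r (ε/β) := lt_min hr (div_pos hε hβ)
      filter_upwards [Metric.ball_mem_nhds (0:H) hδ] with h hh
      rw [Metric.mem_ball, dist_zero_right] at hh
      have hhr : ‖h‖ < r := lt_of_lt_of_le hh (min_le_left _ _)
      have hhε : β * ‖h‖ ≤ ε := by
        have h1 : ‖h‖ < ε/β := lt_of_lt_of_le hh (min_le_right _ _)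
        rw [lt_div_iff₀ hβ] at h1
        linarith [mul_comm β ‖h‖]
      have hxh : x + h ∈ Metric.ball x r := by
        rw [mem_ball_iff_norm]; simpa using hhr
      have hq := quad_bound' (convex_ball x r) hβ.le
        (fun y hy v => hgat y (hUΩ (hball hy)) v)
        (fun a ha b hb => hlip a (hball ha) b (hball hb))
        (Metric.mem_ball_self hr) hxh
      rw [add_sub_cancel_left] at hq
      have hg2 : |f (x + h) - f x - ⟪g x, h⟫| ≤ ε * ‖h‖ := by
        refine hq.trans ?_
        calc β * ‖h‖^2 = (β * ‖h‖) * ‖h‖ := by ring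
          _ ≤ ε * ‖h‖ := mul_le_mul_of_nonneg_right hhε (norm_nonneg _)
      simpa [InnerProductSpace.toDual_apply_apply, Real.norm_eq_abs] using hg2
    · intro x hx
      obtain ⟨U, hU, hUΩ, β, hβ, hco⟩ := hcoco x hx
      have hlip := coco_lip' hβ hco
      refine ⟨U, hU, β.toNNReal, LipschitzOnWith.of_dist_le_mul ?_⟩
      intro u hu v hv
      rw [dist_eq_norm, dist_eq_norm, Real.coe_toNNReal _ hβ.le]
      exact hlip u hu v hv
end
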